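/- arXiv:1410.2772 — 3 statements merged into one kernel-verified Lean document; each statement's English description precedes it below -/
import Mathlib

section
/- Let (W, S) be the universal Coxeter system of rank n ≥ 1 with simple generators t_1, …, t_n and Coxeter length ℓ, let π be an involution of {1,…,n} fixing exactly f points, and let * be the automorphism of W determined by t_i* = t_{π(i)}; set I_* = {w ∈ W : w⁻¹ = w*}. Then: (1) for every k ≥ 1, the set {w ∈ W : ℓ(w) = k} is finite of cardinality n(n−1)^{k−1}; (2) for every k ≥ 1, the set {w ∈ W : w* = w and ℓ(w) = k} is finite of cardinality f·(f−1)^{k−1} (interpreted as 0 when f = 0); (3) for every k ≥ 0, the set {w ∈ I_* : ℓ(w) = 2k+1} is finite of cardinality f·(n−1)^k; (4) for every k ≥ 1, the set {w ∈ I_* : ℓ(w) = 2k} is finite of cardinality (n−f)·(n−1)^{k−1}. (These counts encode the formulas P_{U_n}(q) = (1+q)/(1−(n−1)q), F_{U_n,*}(q) = (1+q)/(1−(f−1)q), and L_{U_n,*}(q) = ((1+q²)/(1+q))·(1−(f−1)q)/(1−(n−1)q²).) -/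
def univMat (n : ℕ) : CoxeterMatrix (Fin n) where
  M := Matrix.of fun i j => if i = j then 1 else 0
  isSymm := by
    unfold Matrix.IsSymm
    ext i j
    simp [Matrix.transpose_apply, eq_comm]
  diagonal := by simp
  off_diagonal := by
    intro i j h
    simp [h]

namespace Univ

variable {n : ℕ}

/-- normal forms: lists with no two adjacent letters equal -/
abbrev NF (n : ℕ) := {l : List (Fin n) // l.Chain' (· ≠ ·)}

def sigFun (i : Fin n) (x : NF n) : NF n :=
  if h : x.1.head? = some i then ⟨x.1.tail, x.2.tail⟩
  else ⟨i :: x.1, List.isChain_cons.2 ⟨fun y hy => fun e => h (e ▸ hy), x.2⟩⟩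

lemma sigFun_invol (i : Fin n) : Function.Involutive (sigFun i) := by
  intro x
  obtain ⟨l, hl⟩ := x
  unfold sigFun
  by_cases h : l.head? = some i
  · simp only [h, dif_pos]
    have hcons : i :: l.tail = l := List.cons_head?_tail h
    have htl : l.tail.head? ≠ some i := by
      intro h2
      rw [← hcons] at hl
      have := (List.isChain_cons.1 hl).1 i h2
      exact this rfl
    simp only [htl, dif_neg]
    exact Subtype.ext hcons
  · simp only [h, dif_neg]
    simp

def sig (i : Fin n) : Equiv.Perm (NF n) := (sigFun_invol i).toPerm

lemma sig_liftable : CoxeterMatrix.IsLiftable (univMat n) sig := by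
  intro i j
  by_cases h : i = j
  · subst h
    have : (univMat n) i i = 1 := by simp [univMat, CoxeterMatrix.M]
    rw [this, pow_one]
    refine Equiv.ext fun x => ?_
    exact (sigFun_invol i) x
  · have : (univMat n) i j = 0 := by simp [univMat, CoxeterMatrix.M, h]
    rw [this, pow_zero]

end Univ

namespace Univ

variable {n : ℕ}

noncomputable abbrev ucs (n : ℕ) : CoxeterSystem (univMat n) (univMat n).Group :=
  (univMat n).toCoxeterSystem

noncomputable def rho : (univMat n).Group →* Equiv.Perm (NF n) :=
  (ucs n).lift ⟨sig, sig_liftable⟩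

lemma rho_simple (i : Fin n) : rho ((ucs n).simple i) = sig i :=
  (ucs n).lift_apply_simple sig_liftable i

def emptyNF (n : ℕ) : NF n := ⟨[], List.isChain_nil⟩

noncomputable def nf (w : (univMat n).Group) : NF n := rho w (emptyNF n)

lemma sig_eq (i : Fin n) (x : NF n) : sig i x = sigFun i x := rfl

lemma wordProd_sig (i : Fin n) (x : NF n) :
    (ucs n).wordProd (sig i x).1 = (ucs n).simple i * (ucs n).wordProd x.1 := by
  rw [sig_eq]
  unfold sigFun
  by_cases h : x.1.head? = some i
  · simp only [h, dif_pos]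
    conv_rhs => rw [← List.cons_head?_tail h]
    rw [CoxeterSystem.wordProd_cons, CoxeterSystem.simple_mul_simple_cancel_left]
  · rw [dif_neg h, CoxeterSystem.wordProd_cons]

lemma len_sig (i : Fin n) (x : NF n) : (sig i x).1.length ≤ x.1.length + 1 := by
  rw [sig_eq]
  unfold sigFun
  by_cases h : x.1.head? = some i
  · simp only [dif_pos h, List.length_tail]
    omega
  · rw [dif_neg h]
    simp

lemma wordProd_rho (l : List (Fin n)) (x : NF n) :
    (ucs n).wordProd ((rho ((ucs n).wordProd l)) x).1 =
      (ucs n).wordProd l * (ucs n).wordProd x.1 := by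
  induction l generalizing x with
  | nil => simp [CoxeterSystem.wordProd]
  | cons i t ih =>
    rw [CoxeterSystem.wordProd_cons, map_mul, rho_simple]
    simp only [Equiv.Perm.mul_apply]
    rw [wordProd_sig, ih, mul_assoc]

lemma wordProd_nf (w : (univMat n).Group) : (ucs n).wordProd (nf w).1 = w := by
  obtain ⟨l, rfl⟩ := (ucs n).wordProd_surjective w
  have := wordProd_rho l (emptyNF n)
  simpa [nf, emptyNF, CoxeterSystem.wordProd] using this

lemma len_rho (l : List (Fin n)) (x : NF n) :
    ((rho ((ucs n).wordProd l)) x).1.length ≤ l.length + x.1.length := by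
  induction l generalizing x with
  | nil => simp [CoxeterSystem.wordProd]
  | cons i t ih =>
    rw [CoxeterSystem.wordProd_cons, map_mul, rho_simple]
    simp only [Equiv.Perm.mul_apply]
    calc (sig i (rho ((ucs n).wordProd t) x)).1.length
        ≤ ((rho ((ucs n).wordProd t)) x).1.length + 1 := len_sig _ _
      _ ≤ t.length + x.1.length + 1 := by have := ih x; omega
      _ = (i :: t).length + x.1.length := by simp; omega

lemma nf_wordProd (l : List (Fin n)) (hl : l.Chain' (· ≠ ·)) :
    nf ((ucs n).wordProd l) = ⟨l, hl⟩ := by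
  induction l with
  | nil => simp [nf, CoxeterSystem.wordProd, emptyNF]
  | cons i t ih =>
    have ht : t.Chain' (· ≠ ·) := (List.isChain_cons.1 hl).2
    rw [CoxeterSystem.wordProd_cons]
    show rho _ _ = _
    rw [map_mul, rho_simple]
    simp only [Equiv.Perm.mul_apply]
    have : rho ((ucs n).wordProd t) (emptyNF n) = ⟨t, ht⟩ := ih ht
    rw [this, sig_eq]
    unfold sigFun
    have hh : (⟨t, ht⟩ : NF n).1.head? ≠ some i := by
      intro h2
      exact (List.isChain_cons.1 hl).1 i h2 rfl
    rw [dif_neg hh]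

lemma length_eq (w : (univMat n).Group) : (ucs n).length w = (nf w).1.length := by
  apply le_antisymm
  · conv_lhs => rw [← wordProd_nf w]
    exact (ucs n).length_wordProd_le (nf w).1
  · obtain ⟨l, hlen, rfl⟩ := (ucs n).exists_reduced_word w
    have := len_rho l (emptyNF n)
    simp only [emptyNF, List.length_nil, Nat.add_zero] at this
    rw [show (ucs n).length ((ucs n).wordProd l) = l.length from hlen]
    exact this

end Univ

namespace Univ

variable {n : ℕ} {π : Equiv.Perm (Fin n)} {φ : (univMat n).Group ≃* (univMat n).Group}

lemma chain'_map_pi (l : List (Fin n)) (hl : l.Chain' (· ≠ ·)) :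
    (l.map π).Chain' (· ≠ ·) :=
  (List.isChain_map π).2 (hl.imp fun _ _ h e => h (π.injective e))

lemma chain'_reverse' (l : List (Fin n)) (hl : l.Chain' (· ≠ ·)) :
    l.reverse.Chain' (· ≠ ·) :=
  List.isChain_reverse.2 (hl.imp fun _ _ h => Ne.symm h)

lemma phi_wordProd (hφ : ∀ i, φ ((univMat n).simple i) = (univMat n).simple (π i))
    (l : List (Fin n)) :
    φ ((ucs n).wordProd l) = (ucs n).wordProd (l.map π) := by
  induction l with
  | nil => simp [CoxeterSystem.wordProd]
  | cons i t ih =>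
    rw [CoxeterSystem.wordProd_cons, map_mul, ih, List.map_cons, CoxeterSystem.wordProd_cons]
    congr 1
    exact hφ i

lemma nf_phi (hφ : ∀ i, φ ((univMat n).simple i) = (univMat n).simple (π i))
    (w : (univMat n).Group) : (nf (φ w)).1 = (nf w).1.map π := by
  conv_lhs => rw [← wordProd_nf w]
  rw [phi_wordProd hφ, nf_wordProd _ (chain'_map_pi _ (nf w).2)]

lemma nf_inv (w : (univMat n).Group) : (nf w⁻¹).1 = (nf w).1.reverse := by
  conv_lhs => rw [← wordProd_nf w, ← CoxeterSystem.wordProd_reverse,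
    nf_wordProd _ (chain'_reverse' _ (nf w).2)]

lemma nf_injective : Function.Injective (nf (n := n)) := by
  intro a b h
  rw [← wordProd_nf a, ← wordProd_nf b, h]

end Univ

namespace Univ

section Count

variable {α : Type*} [Fintype α] [DecidableEq α]

lemma finite_sub {P : List α → Prop} {k : ℕ} (h : ∀ l, P l → l.length = k) :
    Finite {l : List α // P l} := by
  haveI : Finite {l : List α // l.length = k} := by
    refine Finite.of_injective
      (fun x => (fun i : Fin k => x.1.get (i.cast x.2.symm))) ?_
    rintro ⟨l, hl⟩ ⟨l', hl'⟩ hh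
    apply Subtype.ext
    apply List.ext_get (by rw [hl, hl'])
    intro i h1 h2
    simpa using congrFun hh ⟨i, by rw [← hl]; exact h1⟩
  refine Finite.of_injective
    (fun x => (⟨x.1, h x.1 x.2⟩ : {l : List α // l.length = k})) ?_
  intro a b hab
  apply Subtype.ext
  have := congrArg Subtype.val hab
  simpa using this

lemma ncard_sigma {ι : Type*} [Fintype ι] (F : ι → Type*) [∀ i, Finite (F i)] :
    Nat.card ((i : ι) × F i) = ∑ i, Nat.card (F i) := by
  letI : ∀ i, Fintype (F i) := fun i => Fintype.ofFinite _
  simp [Nat.card_eq_fintype_card]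

lemma card_ne (a : α) : Nat.card {b : α // b ≠ a} = Fintype.card α - 1 := by
  rw [Nat.card_eq_fintype_card, Fintype.card_subtype_compl, Fintype.card_subtype_eq]

/-- decompose a chain list with given head -/
def headStepEquiv (a : α) (k : ℕ) :
    {l : List α // l.Chain' (· ≠ ·) ∧ l.length = (k + 1) + 1 ∧ l.head? = some a} ≃
    {x : α × List α //
      (x.2.Chain' (· ≠ ·) ∧ x.2.length = k + 1 ∧ x.2.head? = some x.1) ∧ x.1 ≠ a} where
  toFun x := by
    obtain ⟨l, h1, h2, h3⟩ := x
    have ht : l.tail ≠ [] := by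
      have : l.tail.length = k + 1 := by rw [List.length_tail, h2]; omega
      intro e; rw [e] at this; simp at this
    refine ⟨(l.tail.head ht, l.tail), ⟨h1.tail, ?_, List.head?_eq_head ht⟩, ?_⟩
    · rw [List.length_tail, h2]
      omega
    · have h1' : (a :: l.tail).Chain' (· ≠ ·) := by
        rw [List.cons_head?_tail h3]; exact h1
      exact Ne.symm ((List.isChain_cons.1 h1').1 (l.tail.head ht) (List.head?_eq_head ht))
  invFun y := by
    obtain ⟨⟨b, t⟩, ⟨c1, c2, c3⟩, hb⟩ := y
    refine ⟨a :: t, List.isChain_cons.2 ⟨?_, c1⟩, by simp [c2], rfl⟩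
    intro y hy
    rw [c3] at hy
    cases hy
    exact Ne.symm hb
  left_inv := by
    rintro ⟨l, h1, h2, h3⟩
    exact Subtype.ext (List.cons_head?_tail h3)
  right_inv := by
    rintro ⟨⟨b, t⟩, ⟨c1, c2, c3⟩, hb⟩
    apply Subtype.ext
    apply Prod.ext
    · exact Option.some.inj ((List.head?_eq_head _).symm.trans c3)
    · rfl

lemma countHead : ∀ (k : ℕ) (a : α),
    Nat.card {l : List α // l.Chain' (· ≠ ·) ∧ l.length = k + 1 ∧ l.head? = some a} =
      (Fintype.card α - 1) ^ k := by
  intro k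
  induction k with
  | zero =>
    intro a
    have e : {l : List α // l.Chain' (· ≠ ·) ∧ l.length = 0 + 1 ∧ l.head? = some a} ≃ Unit :=
      { toFun := fun _ => Unit.unit
        invFun := fun _ => ⟨[a], by simp [List.Chain']⟩
        left_inv := by
          rintro ⟨l, h1, h2, h3⟩
          obtain ⟨b, rfl⟩ := List.length_eq_one_iff.1 h2
          apply Subtype.ext
          simp only [List.head?_cons, Option.some.injEq] at h3
          simp [h3]
        right_inv := fun _ => rfl }
    rw [Nat.card_congr e]
    simp
  | succ k ih =>
    intro a
    haveI : ∀ b : α, Finite {l : List α //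
        (l.Chain' (· ≠ ·) ∧ l.length = k + 1 ∧ l.head? = some b) ∧ b ≠ a} :=
      fun b => finite_sub (fun l hl => hl.1.2.1)
    rw [Nat.card_congr ((headStepEquiv a k).trans (Equiv.subtypeProdEquivSigmaSubtype
      (fun (b : α) (l : List α) =>
        (l.Chain' (· ≠ ·) ∧ l.length = k + 1 ∧ l.head? = some b) ∧ b ≠ a))), ncard_sigma]
    have hfib : ∀ b : α, Nat.card {l : List α //
        (l.Chain' (· ≠ ·) ∧ l.length = k + 1 ∧ l.head? = some b) ∧ b ≠ a} =
        if b = a then 0 else (Fintype.card α - 1) ^ k := by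
      intro b
      by_cases hb : b = a
      · subst hb
        rw [if_pos rfl]
        have : IsEmpty {l : List α //
            (l.Chain' (· ≠ ·) ∧ l.length = k + 1 ∧ l.head? = some b) ∧ b ≠ b} :=
          ⟨fun x => x.2.2 rfl⟩
        exact Nat.card_of_isEmpty
      · rw [if_neg hb, Nat.card_congr (Equiv.subtypeEquivRight (fun l => and_iff_left hb)),
          ih b]
    rw [Finset.sum_congr rfl (fun b _ => hfib b), Finset.sum_ite, Finset.sum_const,
      Finset.sum_const]
    rw [Finset.filter_ne', Finset.card_erase_of_mem (Finset.mem_univ a), Finset.card_univ]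
    simp [pow_succ, mul_comm]

lemma countChain (k : ℕ) :
    Nat.card {l : List α // l.Chain' (· ≠ ·) ∧ l.length = k + 1} =
      Fintype.card α * (Fintype.card α - 1) ^ k := by
  have e : {l : List α // l.Chain' (· ≠ ·) ∧ l.length = k + 1} ≃
      {x : α × List α // x.2.Chain' (· ≠ ·) ∧ x.2.length = k + 1 ∧ x.2.head? = some x.1} :=
    { toFun := fun x => by
        obtain ⟨l, h1, h2⟩ := x
        have hl : l ≠ [] := by intro e; rw [e] at h2; simp at h2
        exact ⟨(l.head hl, l), h1, h2, List.head?_eq_head hl⟩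
      invFun := fun y => ⟨y.1.2, y.2.1, y.2.2.1⟩
      left_inv := by rintro ⟨l, h1, h2⟩; rfl
      right_inv := by
        rintro ⟨⟨b, l⟩, h1, h2, h3⟩
        apply Subtype.ext
        apply Prod.ext
        · exact Option.some.inj ((List.head?_eq_head _).symm.trans h3)
        · rfl }
  haveI : ∀ b : α, Finite {l : List α //
      l.Chain' (· ≠ ·) ∧ l.length = k + 1 ∧ l.head? = some b} :=
    fun b => finite_sub (fun l hl => hl.2.1)
  rw [Nat.card_congr (e.trans (Equiv.subtypeProdEquivSigmaSubtype
    (fun (b : α) (l : List α) =>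
      l.Chain' (· ≠ ·) ∧ l.length = k + 1 ∧ l.head? = some b))), ncard_sigma]
  rw [Finset.sum_congr rfl (fun b _ => countHead k b), Finset.sum_const, Finset.card_univ,
    smul_eq_mul]

end Count

end Univ

namespace Univ

section Tw

variable {n : ℕ} {π : Equiv.Perm (Fin n)}

/-- the set of normal forms of twisted involutions of length m -/
abbrev TwT (π : Equiv.Perm (Fin n)) (m : ℕ) :=
  {l : List (Fin n) // l.Chain' (· ≠ ·) ∧ (l.reverse = l.map π ∧ l.length = m)}

lemma pi_pi (hπ : π * π = 1) (a : Fin n) : π (π a) = a := by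
  have := Equiv.ext_iff.1 hπ a
  simpa using this

def twBase1Equiv : TwT π 1 ≃ {a : Fin n // π a = a} where
  toFun x := ⟨x.1.head (List.length_pos_iff.1 (by rw [x.2.2.2]; omega)), by
    obtain ⟨l, h1, h2, h3⟩ := x
    obtain ⟨b, rfl⟩ := List.length_eq_one_iff.1 h3
    simp only [List.reverse_singleton, List.map_cons, List.map_nil, List.cons.injEq,
      and_true] at h2
    simpa using h2.symm⟩
  invFun a := ⟨[a.1], by simp [a.2, List.Chain']⟩
  left_inv := by
    rintro ⟨l, h1, h2, h3⟩
    obtain ⟨b, rfl⟩ := List.length_eq_one_iff.1 h3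
    rfl
  right_inv := by rintro ⟨a, ha⟩; rfl

def twBase2Equiv (hπ : π * π = 1) : TwT π 2 ≃ {a : Fin n // ¬ π a = a} where
  toFun x := ⟨x.1.head (List.length_pos_iff.1 (by rw [x.2.2.2]; omega)), by
    obtain ⟨l, h1, h2, h3⟩ := x
    obtain ⟨a, b, rfl⟩ := List.length_eq_two.1 h3
    simp only [List.reverse_cons, List.reverse_nil, List.nil_append, List.singleton_append,
      List.map_cons, List.map_nil, List.cons.injEq, and_true] at h2
    intro e
    simp only [List.Chain', List.isChain_cons_cons] at h1
    simp only [List.head_cons] at e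
    exact h1.1 (by rw [← e, ← h2.1])⟩
  invFun a := ⟨[a.1, π a.1], by
    refine ⟨?_, ?_, rfl⟩
    · exact List.isChain_cons_cons.2 ⟨fun e => a.2 e.symm, List.isChain_singleton _⟩
    · simp [pi_pi hπ]⟩
  left_inv := by
    rintro ⟨l, h1, h2, h3⟩
    obtain ⟨a, b, rfl⟩ := List.length_eq_two.1 h3
    simp only [List.reverse_cons, List.reverse_nil, List.nil_append, List.singleton_append,
      List.map_cons, List.map_nil, List.cons.injEq, and_true] at h2
    apply Subtype.ext
    simp [← h2.1]
  right_inv := by rintro ⟨a, ha⟩; rfl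

end Tw

end Univ

namespace Univ

section Tw2

variable {n : ℕ} {π : Equiv.Perm (Fin n)}

lemma twStep_aux (m : ℕ) {l : List (Fin n)}
    (h1 : l.Chain' (· ≠ ·)) (h2 : l.reverse = l.map π) (h3 : l.length = m + 3)
    (hl : l ≠ []) :
    l.tail.dropLast.Chain' (· ≠ ·) ∧
    (l.tail.dropLast.reverse = l.tail.dropLast.map π ∧ l.tail.dropLast.length = m + 1) ∧
    l.tail.dropLast.head? ≠ some (l.head hl) ∧
    l = l.head hl :: (l.tail.dropLast ++ [π (l.head hl)]) := by
  set a := l.head hl with ha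
  have ht : l.tail ≠ [] := by
    have : l.tail.length = m + 2 := by rw [List.length_tail, h3]; omega
    intro e; rw [e] at this; simp at this
  set u := l.tail.dropLast with hu
  set b := l.tail.getLast ht with hb
  have hdec : l = a :: (u ++ [b]) := by
    conv_lhs => rw [← List.cons_head?_tail (List.head?_eq_head hl),
      ← List.dropLast_append_getLast ht]
  have hulen : u.length = m + 1 := by
    rw [hu, List.length_dropLast, List.length_tail, h3]; omega
  have hu_ne : u ≠ [] := by
    intro e; rw [e] at hulen; simp at hulen
  rw [hdec] at h1 h2
  have h2' : b :: (u.reverse ++ [a]) = π a :: (u.map π ++ [π b]) := by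
    simpa using h2
  rw [List.cons.injEq] at h2'
  obtain ⟨hba, h2''⟩ := h2'
  have hrev : u.reverse = u.map π :=
    (List.append_inj h2'' (by simp)).1
  have hhead := (List.isChain_cons.1 h1).1
  have hrest := (List.isChain_cons.1 h1).2
  have hchain : u.Chain' (· ≠ ·) := (List.isChain_append.1 hrest).1
  have hheadu : u.head? ≠ some a := by
    intro e
    have : (u ++ [b]).head? = u.head? := List.head?_append_of_ne_nil u hu_ne
    exact hhead a (by rw [this, e]; rfl) rfl
  exact ⟨hchain, ⟨hrev, hulen⟩, hheadu, by rw [hdec, hba]⟩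

lemma twStep_inv_aux (hπ : π * π = 1) (m : ℕ) {u : List (Fin n)} {a : Fin n}
    (c1 : u.Chain' (· ≠ ·)) (c2 : u.reverse = u.map π) (c3 : u.length = m + 1)
    (ha : u.head? ≠ some a) :
    (a :: (u ++ [π a])).Chain' (· ≠ ·) ∧
    ((a :: (u ++ [π a])).reverse = (a :: (u ++ [π a])).map π ∧
      (a :: (u ++ [π a])).length = m + 3) := by
  have hu_ne : u ≠ [] := by
    intro e; rw [e] at c3; simp at c3
  have hh : u.head? = some (u.head hu_ne) := List.head?_eq_head hu_ne
  have hane : a ≠ u.head hu_ne := by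
    intro e; exact ha (by rw [hh, e])
  have hlast : u.getLast? = some (π (u.head hu_ne)) := by
    rw [List.getLast?_eq_head?_reverse, c2, List.head?_map, hh]; rfl
  refine ⟨?_, ?_, ?_⟩
  · refine List.isChain_cons.2 ⟨?_, ?_⟩
    · intro y hy
      rw [List.head?_append_of_ne_nil u hu_ne, hh] at hy
      cases hy
      exact hane
    · refine List.isChain_append.2 ⟨c1, List.isChain_singleton _, ?_⟩
      intro x hx y hy
      rw [hlast] at hx
      cases hx
      rw [Option.mem_def, List.head?_cons, Option.some_inj] at hy
      subst hy
      exact fun e => hane (π.injective e.symm)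
  · simp [pi_pi hπ, c2]
  · simp [c3]

def twStepEquiv (hπ : π * π = 1) (m : ℕ) :
    TwT π (m + 3) ≃ {x : TwT π (m + 1) × Fin n // x.1.1.head? ≠ some x.2} where
  toFun x :=
    ⟨(⟨x.1.tail.dropLast,
        (twStep_aux m x.2.1 x.2.2.1 x.2.2.2
          (List.length_pos_iff.1 (by rw [x.2.2.2]; omega))).1,
        (twStep_aux m x.2.1 x.2.2.1 x.2.2.2
          (List.length_pos_iff.1 (by rw [x.2.2.2]; omega))).2.1⟩,
      x.1.head (List.length_pos_iff.1 (by rw [x.2.2.2]; omega))),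
      (twStep_aux m x.2.1 x.2.2.1 x.2.2.2
        (List.length_pos_iff.1 (by rw [x.2.2.2]; omega))).2.2.1⟩
  invFun y :=
    ⟨y.1.2 :: (y.1.1.1 ++ [π y.1.2]),
      (twStep_inv_aux hπ m y.1.1.2.1 y.1.1.2.2.1 y.1.1.2.2.2 y.2).1,
      (twStep_inv_aux hπ m y.1.1.2.1 y.1.1.2.2.1 y.1.1.2.2.2 y.2).2⟩
  left_inv := by
    rintro ⟨l, h1, h2, h3⟩
    apply Subtype.ext
    exact (twStep_aux m h1 h2 h3 (List.length_pos_iff.1 (by rw [h3]; omega))).2.2.2.symm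
  right_inv := by
    rintro ⟨⟨⟨u, c1, c2, c3⟩, a⟩, ha⟩
    apply Subtype.ext
    apply Prod.ext
    · apply Subtype.ext
      simp only [List.tail_cons]
      exact List.dropLast_concat
    · rfl

lemma twStep (hπ : π * π = 1) (m : ℕ) :
    Nat.card (TwT π (m + 3)) = (n - 1) * Nat.card (TwT π (m + 1)) := by
  haveI : Finite (TwT π (m + 1)) := finite_sub (fun l hl => hl.2.2)
  haveI : Fintype (TwT π (m + 1)) := Fintype.ofFinite _
  rw [Nat.card_congr ((twStepEquiv hπ m).trans (Equiv.subtypeProdEquivSigmaSubtype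
    (fun (x : TwT π (m + 1)) (a : Fin n) => x.1.head? ≠ some a))), ncard_sigma]
  have hfib : ∀ x : TwT π (m + 1), Nat.card {a : Fin n // x.1.head? ≠ some a} = n - 1 := by
    intro x
    have hx : x.1 ≠ [] := by
      intro e
      have := x.2.2.2
      rw [e] at this; simp at this
    have hh : x.1.head? = some (x.1.head hx) := List.head?_eq_head hx
    rw [Nat.card_congr (Equiv.subtypeEquivRight (q := fun a => a ≠ x.1.head hx)
      (fun a => by rw [hh]; simp [eq_comm]))]
    rw [card_ne, Fintype.card_fin]
  rw [Finset.sum_congr rfl (fun x _ => hfib x), Finset.sum_const, Finset.card_univ,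
    smul_eq_mul, ← Nat.card_eq_fintype_card, mul_comm]

lemma twOdd (hπ : π * π = 1) (k : ℕ) :
    Nat.card (TwT π (2 * k + 1)) = Nat.card {a : Fin n // π a = a} * (n - 1) ^ k := by
  induction k with
  | zero => rw [Nat.card_congr twBase1Equiv]; simp
  | succ k ih =>
    rw [show 2 * (k + 1) + 1 = 2 * k + 3 by omega,
      show 2 * k + 3 = (2 * k) + 3 by omega, twStep hπ (2 * k), ih]
    ring
lemma twEven (hπ : π * π = 1) (k : ℕ) :
    Nat.card (TwT π (2 * k + 2)) = Nat.card {a : Fin n // ¬ π a = a} * (n - 1) ^ k := by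
  induction k with
  | zero => rw [Nat.card_congr (twBase2Equiv hπ)]; simp
  | succ k ih =>
    rw [show 2 * (k + 1) + 2 = (2 * k + 1) + 3 by omega, twStep hπ (2 * k + 1),
      show 2 * k + 1 + 1 = 2 * k + 2 by omega, ih]
    ring

end Tw2

end Univ

namespace Univ

section Fixed

variable {n : ℕ} {π : Equiv.Perm (Fin n)}

lemma mem_fixed_of_map_eq : ∀ {l : List (Fin n)}, l.map π = l → ∀ a ∈ l, π a = a := by
  intro l
  induction l with
  | nil => intro _ a ha; simp at ha
  | cons b t ih =>
    intro h a ha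
    rw [List.map_cons, List.cons.injEq] at h
    rw [List.mem_cons] at ha
    rcases ha with ha | ha
    · exact ha ▸ h.1
    · exact ih h.2 a ha

lemma pmap_val (y : List {i : Fin n // π i = i}) :
    ∀ (H : ∀ a ∈ y, π a.1 = a.1),
      List.pmap (fun (a : {i : Fin n // π i = i}) (h : π a.1 = a.1) =>
        (⟨a.1, h⟩ : {i : Fin n // π i = i})) y H = y := by
  induction y with
  | nil => intro H; rfl
  | cons b t ih =>
    intro H
    simp only [List.pmap]
    rw [ih]

def fixedEquiv (k : ℕ) :
    {l : List (Fin n) // l.Chain' (· ≠ ·) ∧ (l.map π = l ∧ l.length = k)} ≃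
    {l : List {i : Fin n // π i = i} // l.Chain' (· ≠ ·) ∧ l.length = k} where
  toFun x :=
    ⟨x.1.pmap (fun a h => ⟨a, h⟩) (mem_fixed_of_map_eq x.2.2.1), by
      have hmap : (x.1.pmap (fun (a : Fin n) (h : π a = a) =>
          (⟨a, h⟩ : {i : Fin n // π i = i})) (mem_fixed_of_map_eq x.2.2.1)).map Subtype.val
          = x.1 := by
        simp [List.map_pmap, List.pmap_eq_map]
      constructor
      · have := x.2.1
        rw [← hmap, List.Chain', List.isChain_map] at this
        exact this.imp (fun _ _ h e => h (congrArg Subtype.val e))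
      · simp [x.2.2.2]⟩
  invFun y :=
    ⟨y.1.map Subtype.val, by
      refine ⟨(List.isChain_map Subtype.val).2
        (y.2.1.imp (fun _ _ h e => h (Subtype.ext e))), ?_, by simp [y.2.2]⟩
      rw [List.map_map]
      exact List.map_congr_left (fun a _ => a.2)⟩
  left_inv x := Subtype.ext (by simp [List.map_pmap, List.pmap_eq_map])
  right_inv y := Subtype.ext (by
    simp only [List.pmap_map]
    exact pmap_val y.1 _)

end Fixed

section Main

variable {n : ℕ}

noncomputable def nfEquiv (P : List (Fin n) → Prop) :
    {w : (univMat n).Group // P (nf w).1} ≃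
      {l : List (Fin n) // l.Chain' (· ≠ ·) ∧ P l} where
  toFun w := ⟨(nf w.1).1, (nf w.1).2, w.2⟩
  invFun l := ⟨(ucs n).wordProd l.1, by rw [nf_wordProd l.1 l.2.1]; exact l.2.2⟩
  left_inv w := Subtype.ext (wordProd_nf w.1)
  right_inv l := Subtype.ext
    (show (nf ((ucs n).wordProd l.1)).1 = l.1 by rw [nf_wordProd l.1 l.2.1])

variable {π : Equiv.Perm (Fin n)} {φ : (univMat n).Group ≃* (univMat n).Group}

lemma phi_fixed_iff (hφ : ∀ i, φ ((univMat n).simple i) = (univMat n).simple (π i))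
    (w : (univMat n).Group) : φ w = w ↔ (nf w).1.map π = (nf w).1 := by
  constructor
  · intro h
    have h2 := nf_phi hφ w
    rw [h] at h2
    exact h2.symm
  · intro h
    have h2 := nf_phi hφ w
    rw [h] at h2
    exact nf_injective (Subtype.ext h2)

lemma tw_iff (hφ : ∀ i, φ ((univMat n).simple i) = (univMat n).simple (π i))
    (w : (univMat n).Group) : w⁻¹ = φ w ↔ (nf w).1.reverse = (nf w).1.map π := by
  constructor
  · intro h
    rw [← nf_inv w, h, nf_phi hφ w]
  · intro h
    have : (nf w⁻¹).1 = (nf (φ w)).1 := by rw [nf_inv w, nf_phi hφ w, h]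
    exact nf_injective (Subtype.ext this)

end Main

end Univ

/-- Let `(W, S)` be the universal Coxeter system of rank `n ≥ 1` with simple
generators `t_1, …, t_n` and length `ℓ`, let `π` be an involution of `{1,…,n}` with exactly `f`
fixed points, and let `*` (here `φ`) be the automorphism of `W` with `t_i* = t_{π i}`; let
`I_* = {w : w⁻¹ = w*}`. Then: (1) `#{w : ℓ w = k} = n(n−1)^{k−1}` for `k ≥ 1`;
(2) `#{w : w* = w, ℓ w = k} = f(f−1)^{k−1}` for `k ≥ 1` (which is `0` when `f = 0`);
(3) `#{w ∈ I_* : ℓ w = 2k+1} = f(n−1)^k` for `k ≥ 0`;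
(4) `#{w ∈ I_* : ℓ w = 2k} = (n−f)(n−1)^{k−1}` for `k ≥ 1`.
(These counts encode the formulas for `P_{U_n}(q)`, `F_{U_n,*}(q)` and `L_{U_n,*}(q)`.) -/
theorem statement8 (n : ℕ) (hn : 1 ≤ n) (π : Equiv.Perm (Fin n)) (hπ : π * π = 1)
    (f : ℕ) (hf : f = (Finset.univ.filter fun i => π i = i).card)
    (φ : (univMat n).Group ≃* (univMat n).Group)
    (hφ : ∀ i, φ ((univMat n).simple i) = (univMat n).simple (π i)) :
    (∀ k : ℕ, 1 ≤ k →
        Nat.card {w : (univMat n).Group // (univMat n).toCoxeterSystem.length w = k} =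
          n * (n - 1) ^ (k - 1)) ∧
    (∀ k : ℕ, 1 ≤ k →
        Nat.card {w : (univMat n).Group //
            φ w = w ∧ (univMat n).toCoxeterSystem.length w = k} =
          f * (f - 1) ^ (k - 1)) ∧
    (∀ k : ℕ,
        Nat.card {w : (univMat n).Group //
            w⁻¹ = φ w ∧ (univMat n).toCoxeterSystem.length w = 2 * k + 1} =
          f * (n - 1) ^ k) ∧
    (∀ k : ℕ, 1 ≤ k →
        Nat.card {w : (univMat n).Group //
            w⁻¹ = φ w ∧ (univMat n).toCoxeterSystem.length w = 2 * k} =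
          (n - f) * (n - 1) ^ (k - 1)) := by
  refine ⟨?_, ?_, ?_, ?_⟩
  · -- part 1
    intro k hk
    obtain ⟨j, rfl⟩ : ∃ j, k = j + 1 := ⟨k - 1, by omega⟩
    rw [Nat.card_congr ((Equiv.subtypeEquivRight (fun w => by
        rw [Univ.length_eq])).trans (Univ.nfEquiv (fun l => l.length = j + 1)))]
    rw [Univ.countChain j, Fintype.card_fin]
    simp
  · -- part 2
    intro k hk
    obtain ⟨j, rfl⟩ : ∃ j, k = j + 1 := ⟨k - 1, by omega⟩
    rw [Nat.card_congr (((Equiv.subtypeEquivRight (fun w => by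
        rw [Univ.length_eq, Univ.phi_fixed_iff hφ])).trans
        (Univ.nfEquiv (fun l => l.map π = l ∧ l.length = j + 1))).trans
        (Univ.fixedEquiv (j + 1)))]
    rw [Univ.countChain j, Fintype.card_subtype, ← hf]
    simp
  · -- part 3
    intro k
    rw [Nat.card_congr ((Equiv.subtypeEquivRight (fun w => by
        rw [Univ.length_eq, Univ.tw_iff hφ])).trans
        (Univ.nfEquiv (fun l => l.reverse = l.map π ∧ l.length = 2 * k + 1)))]
    rw [show Nat.card {l : List (Fin n) // l.Chain' (· ≠ ·) ∧
        (l.reverse = l.map π ∧ l.length = 2 * k + 1)} = Nat.card (Univ.TwT π (2 * k + 1))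
        from rfl]
    rw [Univ.twOdd hπ k, Nat.card_eq_fintype_card, Fintype.card_subtype, ← hf]
  · -- part 4
    intro k hk
    obtain ⟨j, rfl⟩ : ∃ j, k = j + 1 := ⟨k - 1, by omega⟩
    rw [Nat.card_congr ((Equiv.subtypeEquivRight (fun w => by
        rw [Univ.length_eq, Univ.tw_iff hφ])).trans
        (Univ.nfEquiv (fun l => l.reverse = l.map π ∧ l.length = 2 * (j + 1))))]
    rw [show Nat.card {l : List (Fin n) // l.Chain' (· ≠ ·) ∧
        (l.reverse = l.map π ∧ l.length = 2 * (j + 1))} = Nat.card (Univ.TwT π (2 * j + 2))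
        from by rw [show 2 * (j + 1) = 2 * j + 2 by omega]]
    rw [Univ.twEven hπ j, Nat.card_eq_fintype_card, Fintype.card_subtype_compl,
      Fintype.card_fin, Fintype.card_subtype, ← hf]
    simp
end

section
/- Let n ≥ 2 and let R = {u s_i u⁻¹ : u ∈ S̃_n, 0 ≤ i ≤ n−1} be the set of reflections of S̃_n. For every involution w ∈ S̃_n (i.e. w² = 1), the minimal natural number k such that w equals a product of k elements of R (with k = 0 for w = 1) is exactly (n − #{i ∈ {1,…,n} : w(i) = i})/2. In other words, the absolute length of an involution w in S̃_n equals half of n minus the number of its fixed points in {1,…,n}. -/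
open scoped Classical

noncomputable section

/-- The function underlying the simple generator `s_i` of the affine symmetric group. -/
def sFun (n i : ℕ) (j : ℤ) : ℤ :=
  if (n : ℤ) ∣ j - (i : ℤ) then j + 1
  else if (n : ℤ) ∣ j - ((i : ℤ) + 1) then j - 1
  else j

lemma sFun_invol (n i : ℕ) (h : ¬ (n : ℤ) ∣ 1) : Function.Involutive (sFun n i) := by
  intro j
  unfold sFun
  by_cases h1 : (n : ℤ) ∣ j - (i : ℤ)
  · have h2 : ¬ (n : ℤ) ∣ (j + 1) - (i : ℤ) := by
      intro hd
      have h3 : (n : ℤ) ∣ ((j + 1) - (i : ℤ)) - (j - (i : ℤ)) := dvd_sub hd h1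
      have h4 : ((j + 1) - (i : ℤ)) - (j - (i : ℤ)) = 1 := by ring
      rw [h4] at h3
      exact h h3
    have h3 : (n : ℤ) ∣ (j + 1) - ((i : ℤ) + 1) := by
      have h4 : (j + 1) - ((i : ℤ) + 1) = j - (i : ℤ) := by ring
      rw [h4]
      exact h1
    rw [if_pos h1, if_neg h2, if_pos h3]
    ring
  · by_cases h2 : (n : ℤ) ∣ j - ((i : ℤ) + 1)
    · have h3 : (n : ℤ) ∣ (j - 1) - (i : ℤ) := by
        have h4 : (j - 1) - (i : ℤ) = j - ((i : ℤ) + 1) := by ring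
        rw [h4]
        exact h2
      rw [if_neg h1, if_pos h2, if_pos h3]
      ring
    · rw [if_neg h1, if_neg h2, if_neg h1, if_neg h2]

/-- The simple generator `s_i` of the affine symmetric group `S̃_n`:
`j ↦ j+1` if `j ≡ i (mod n)`, `j ↦ j-1` if `j ≡ i+1 (mod n)`, `j ↦ j` otherwise.
(For the degenerate case `n = 1`, where this recipe does not define a bijection,
we use the identity; all results below assume `n ≥ 2`.) -/
def sGen (n i : ℕ) : Equiv.Perm ℤ :=
  if h : (n : ℤ) ∣ 1 then 1
  else ⟨sFun n i, sFun n i, sFun_invol n i h, sFun_invol n i h⟩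

/-- Membership in the affine symmetric group `S̃_n`: a bijection `w : ℤ → ℤ` with
`w (i + n) = w i + n` for all `i` and `∑_{i=1}^n w i = ∑_{i=1}^n i`. -/
def IsAffinePerm (n : ℕ) (w : Equiv.Perm ℤ) : Prop :=
  (∀ i : ℤ, w (i + (n : ℤ)) = w i + (n : ℤ)) ∧
    ∑ i ∈ Finset.Icc (1 : ℤ) (n : ℤ), w i = ∑ i ∈ Finset.Icc (1 : ℤ) (n : ℤ), i


namespace AffAux

lemma not_dvd_one {n : ℕ} (hn : 2 ≤ n) : ¬ (n : ℤ) ∣ 1 := by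
  intro h
  have h1 := Int.le_of_dvd one_pos h
  omega

lemma dvd_iff_dvd {n : ℕ} {x x' y y' : ℤ} (hx : (n:ℤ) ∣ x - x') (hy : (n:ℤ) ∣ y - y') :
    ((n:ℤ) ∣ x - y ↔ (n:ℤ) ∣ x' - y') := by
  constructor <;> intro h
  · have h2 := dvd_add (dvd_sub h hx) hy
    rwa [show x - y - (x - x') + (y - y') = x' - y' by ring] at h2
  · have h2 := dvd_sub (dvd_add h hx) hy
    rwa [show x' - y' + (x - x') - (y - y') = x - y by ring] at h2

lemma dvd_comm' {n : ℕ} {x y : ℤ} : (n:ℤ) ∣ x - y ↔ (n:ℤ) ∣ y - x := by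
  constructor <;> intro h
  · rw [← neg_sub]; exact dvd_neg.mpr h
  · rw [← neg_sub]; exact dvd_neg.mpr h

/-- generic "two-class" function -/
def gFun (n : ℕ) (a b x y : ℤ) (j : ℤ) : ℤ :=
  if (n:ℤ) ∣ j - a then j + x else if (n:ℤ) ∣ j - b then j + y else j

lemma gFun_linv {n : ℕ} {a b x y : ℤ} (hab : ¬ (n:ℤ) ∣ b - a)
    (hx : (n:ℤ) ∣ x) (hy : (n:ℤ) ∣ y) (j : ℤ) :
    gFun n a b (-x) (-y) (gFun n a b x y j) = j := by
  unfold gFun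
  by_cases h1 : (n:ℤ) ∣ j - a
  · have h2 : (n:ℤ) ∣ (j + x) - a := by
      have := dvd_add h1 hx
      rwa [show j - a + x = (j + x) - a by ring] at this
    rw [if_pos h1, if_pos h2]; ring
  · by_cases h2 : (n:ℤ) ∣ j - b
    · have h3 : ¬ (n:ℤ) ∣ (j + y) - a := by
        intro hd
        have := dvd_sub hd hy
        rw [show (j + y) - a - y = j - a by ring] at this
        exact h1 this
      have h4 : (n:ℤ) ∣ (j + y) - b := by
        have := dvd_add h2 hy
        rwa [show j - b + y = (j + y) - b by ring] at this
      rw [if_neg h1, if_pos h2, if_neg h3, if_pos h4]; ring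
    · rw [if_neg h1, if_neg h2, if_neg h1, if_neg h2]

lemma gFun_eval_a {n : ℕ} {a j : ℤ} (b x y : ℤ) (h : (n:ℤ) ∣ j - a) :
    gFun n a b x y j = j + x := if_pos h

lemma gFun_eval_b {n : ℕ} {a b j : ℤ} (x y : ℤ) (h1 : ¬ (n:ℤ) ∣ j - a)
    (h2 : (n:ℤ) ∣ j - b) : gFun n a b x y j = j + y := by
  unfold gFun; rw [if_neg h1, if_pos h2]

lemma gFun_eval_fix {n : ℕ} {a b j : ℤ} (x y : ℤ) (h1 : ¬ (n:ℤ) ∣ j - a)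
    (h2 : ¬ (n:ℤ) ∣ j - b) : gFun n a b x y j = j := by
  unfold gFun; rw [if_neg h1, if_neg h2]

/-- the transposition function -/
def tFun (n : ℕ) (a b : ℤ) (j : ℤ) : ℤ :=
  if (n:ℤ) ∣ j - a then j + (b - a) else if (n:ℤ) ∣ j - b then j - (b - a) else j

lemma tFun_eq_gFun (n : ℕ) (a b : ℤ) : tFun n a b = gFun n a b (b - a) (-(b - a)) := by
  funext j
  simp only [tFun, gFun, sub_eq_add_neg]

lemma sFun_eq_gFun (n i : ℕ) : sFun n i = gFun n (i : ℤ) ((i : ℤ) + 1) 1 (-1) := by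
  funext j
  simp only [sFun, gFun, sub_eq_add_neg]

lemma tFun_invol (n : ℕ) (a b : ℤ) (h : ¬ (n:ℤ) ∣ b - a) :
    Function.Involutive (tFun n a b) := by
  intro j
  unfold tFun
  by_cases h1 : (n:ℤ) ∣ j - a
  · have h2 : ¬ (n:ℤ) ∣ (j + (b - a)) - a := by
      intro hd
      have h3 := dvd_sub hd h1
      rw [show (j + (b - a)) - a - (j - a) = b - a by ring] at h3
      exact h h3
    have h3 : (n:ℤ) ∣ (j + (b - a)) - b := by
      rw [show (j + (b - a)) - b = j - a by ring]; exact h1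
    rw [if_pos h1, if_neg h2, if_pos h3]; ring
  · by_cases h2 : (n:ℤ) ∣ j - b
    · have h3 : (n:ℤ) ∣ (j - (b - a)) - a := by
        rw [show (j - (b - a)) - a = j - b by ring]; exact h2
      rw [if_neg h1, if_pos h2, if_pos h3]; ring
    · rw [if_neg h1, if_neg h2, if_neg h1, if_neg h2]

/-- the transposition `t_{a,b}` (identity in the degenerate case). -/
def tPerm (n : ℕ) (a b : ℤ) : Equiv.Perm ℤ :=
  if h : (n:ℤ) ∣ b - a then 1
  else ⟨tFun n a b, tFun n a b, tFun_invol n a b h, tFun_invol n a b h⟩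

lemma tPerm_apply {n : ℕ} {a b : ℤ} (h : ¬ (n:ℤ) ∣ b - a) (j : ℤ) :
    tPerm n a b j = tFun n a b j := by
  rw [tPerm, dif_neg h]; rfl

lemma tPerm_mul_self {n : ℕ} {a b : ℤ} (h : ¬ (n:ℤ) ∣ b - a) :
    tPerm n a b * tPerm n a b = 1 := by
  apply Equiv.ext
  intro j
  rw [Equiv.Perm.mul_apply, tPerm_apply h, tPerm_apply h]
  exact tFun_invol n a b h j

lemma sGen_apply {n : ℕ} (hn1 : ¬ (n:ℤ) ∣ 1) (i : ℕ) (j : ℤ) :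
    sGen n i j = sFun n i j := by
  rw [sGen, dif_neg hn1]; rfl

lemma sGen_eq_tPerm {n : ℕ} (hn1 : ¬ (n:ℤ) ∣ 1) (i : ℕ) :
    sGen n i = tPerm n (i : ℤ) ((i : ℤ) + 1) := by
  have h : ¬ (n:ℤ) ∣ ((i : ℤ) + 1) - (i : ℤ) := by
    rwa [add_sub_cancel_left]
  apply Equiv.ext
  intro j
  rw [sGen_apply hn1, tPerm_apply h]
  unfold sFun tFun
  rw [add_sub_cancel_left]

/-- the "shift" permutation moving class `r` up by `n` and class `r'` down by `n`. -/
def tauPerm (n : ℕ) (r r' : ℤ) : Equiv.Perm ℤ :=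
  if h : (n:ℤ) ∣ r' - r then 1
  else ⟨gFun n r r' n (-n), gFun n r r' (-n) n, fun j => by
      simpa using gFun_linv h (dvd_refl (n:ℤ)) (dvd_neg.mpr (dvd_refl (n:ℤ))) j,
    fun j => by
      have := gFun_linv h (dvd_neg.mpr (dvd_refl (n:ℤ))) (dvd_refl (n:ℤ)) j
      simpa using this⟩

lemma tauPerm_apply {n : ℕ} {r r' : ℤ} (h : ¬ (n:ℤ) ∣ r' - r) (j : ℤ) :
    tauPerm n r r' j = gFun n r r' n (-n) j := by
  rw [tauPerm, dif_neg h]; rfl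

/-- periodicity predicate -/
def Per (n : ℕ) (w : Equiv.Perm ℤ) : Prop := ∀ i : ℤ, w (i + (n:ℤ)) = w i + (n:ℤ)

lemma Per.mul {n : ℕ} {u v : Equiv.Perm ℤ} (hu : Per n u) (hv : Per n v) :
    Per n (u * v) := fun i => by
  rw [Equiv.Perm.mul_apply, Equiv.Perm.mul_apply, hv i, hu (v i)]

lemma Per.inv {n : ℕ} {u : Equiv.Perm ℤ} (hu : Per n u) : Per n u⁻¹ := by
  intro i
  apply u.injective
  rw [show u (u⁻¹ (i + (n:ℤ))) = i + (n:ℤ) from Equiv.apply_symm_apply u _, hu,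
    show u (u⁻¹ i) = i from Equiv.apply_symm_apply u i]

lemma Per.zsmul {n : ℕ} {u : Equiv.Perm ℤ} (hu : Per n u) (i k : ℤ) :
    u (i + (n:ℤ) * k) = u i + (n:ℤ) * k := by
  induction k using Int.induction_on with
  | zero => simp
  | succ m ih =>
    have h1 := hu (i + (n:ℤ) * m)
    rw [show i + (n:ℤ) * ((m:ℤ) + 1) = (i + (n:ℤ) * m) + (n:ℤ) by ring, h1, ih]
    ring
  | pred m ih =>
    have h1 := hu (i + (n:ℤ) * (-(m:ℤ) - 1))
    rw [show i + (n:ℤ) * (-(m:ℤ) - 1) + (n:ℤ) = i + (n:ℤ) * (-(m:ℤ)) by ring] at h1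
    have h2 : u (i + (n:ℤ) * (-(m:ℤ) - 1)) = u i + (n:ℤ) * (-(m:ℤ)) - n := by
      linarith [h1, ih]
    rw [h2]; ring

lemma Per.dvd_iff {n : ℕ} {u : Equiv.Perm ℤ} (hu : Per n u) (x y : ℤ) :
    (n:ℤ) ∣ u x - u y ↔ (n:ℤ) ∣ x - y := by
  constructor <;> intro h
  · obtain ⟨k, hk⟩ := h
    have h1 : u x = u (y + (n:ℤ) * k) := by rw [hu.zsmul y k]; linarith
    have h2 : x = y + (n:ℤ) * k := u.injective h1
    exact ⟨k, by linarith⟩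
  · obtain ⟨k, hk⟩ := h
    have h1 : x = y + (n:ℤ) * k := by linarith
    rw [h1, hu.zsmul y k]
    exact ⟨k, by ring⟩

lemma gFun_per {n : ℕ} (a b x y j : ℤ) :
    gFun n a b x y (j + (n:ℤ)) = gFun n a b x y j + (n:ℤ) := by
  have e1 : ((n:ℤ) ∣ (j + (n:ℤ)) - a) ↔ ((n:ℤ) ∣ j - a) :=
    dvd_iff_dvd ⟨1, by ring⟩ (by simp)
  have e2 : ((n:ℤ) ∣ (j + (n:ℤ)) - b) ↔ ((n:ℤ) ∣ j - b) :=
    dvd_iff_dvd ⟨1, by ring⟩ (by simp)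
  unfold gFun
  by_cases h1 : (n:ℤ) ∣ j - a
  · rw [if_pos h1, if_pos (e1.mpr h1)]; ring
  · by_cases h2 : (n:ℤ) ∣ j - b
    · rw [if_neg h1, if_pos h2, if_neg (fun h => h1 (e1.mp h)), if_pos (e2.mpr h2)]; ring
    · rw [if_neg h1, if_neg h2, if_neg (fun h => h1 (e1.mp h)), if_neg (fun h => h2 (e2.mp h))]

lemma Per.one {n : ℕ} : Per n (1 : Equiv.Perm ℤ) := fun _ => rfl

lemma per_tPerm {n : ℕ} (a b : ℤ) : Per n (tPerm n a b) := by
  by_cases h : (n:ℤ) ∣ b - a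
  · rw [tPerm, dif_pos h]; exact Per.one
  · intro j
    rw [tPerm_apply h, tPerm_apply h, tFun_eq_gFun]
    exact gFun_per _ _ _ _ _

lemma per_sGen {n : ℕ} (i : ℕ) : Per n (sGen n i) := by
  by_cases h : (n:ℤ) ∣ 1
  · rw [sGen, dif_pos h]; exact Per.one
  · intro j
    rw [sGen_apply h, sGen_apply h, sFun_eq_gFun]
    exact gFun_per _ _ _ _ _

lemma per_tauPerm {n : ℕ} (r r' : ℤ) : Per n (tauPerm n r r') := by
  by_cases h : (n:ℤ) ∣ r' - r
  · rw [tauPerm, dif_pos h]; exact Per.one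
  · intro j
    rw [tauPerm_apply h, tauPerm_apply h]
    exact gFun_per _ _ _ _ _

/-- the representative of the class of `c` in `[1, n]` -/
def repr1 (n : ℕ) (c : ℤ) : ℤ := (c - 1) % (n:ℤ) + 1

lemma repr1_mem {n : ℕ} (hn0 : 0 < n) (c : ℤ) : repr1 n c ∈ Finset.Icc (1:ℤ) (n:ℤ) := by
  have h0 : (0:ℤ) < (n:ℤ) := by exact_mod_cast hn0
  have h1 := Int.emod_nonneg (c - 1) (by omega : (n:ℤ) ≠ 0)
  have h2 := Int.emod_lt_of_pos (c - 1) h0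
  rw [Finset.mem_Icc, repr1]
  omega

lemma repr1_dvd (n : ℕ) (c : ℤ) : (n:ℤ) ∣ repr1 n c - c :=
  ⟨-((c - 1) / (n:ℤ)), by rw [repr1, Int.emod_def]; ring⟩

lemma eq_of_mem_Icc_dvd {n : ℕ} {j j' : ℤ} (hj : j ∈ Finset.Icc (1:ℤ) (n:ℤ))
    (hj' : j' ∈ Finset.Icc (1:ℤ) (n:ℤ)) (h : (n:ℤ) ∣ j - j') : j = j' := by
  rw [Finset.mem_Icc] at hj hj'
  by_contra hne
  have hne' : j - j' ≠ 0 := fun hh => hne (by linarith)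
  have h1 : (n:ℤ) ≤ |j - j'| := Int.le_of_dvd (abs_pos.mpr hne') ((dvd_abs _ _).mpr h)
  rcases abs_cases (j - j') with h2 | h2 <;> rw [h2.1] at h1 <;> omega

lemma repr1_unique {n : ℕ} (hn0 : 0 < n) {j c : ℤ} (hj : j ∈ Finset.Icc (1:ℤ) (n:ℤ))
    (h : (n:ℤ) ∣ j - c) : j = repr1 n c :=
  eq_of_mem_Icc_dvd hj (repr1_mem hn0 c)
    (by have := dvd_sub h (repr1_dvd n c)
        rwa [show j - c - (repr1 n c - c) = j - repr1 n c by ring] at this)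

lemma filter_dvd_eq_singleton {n : ℕ} (hn0 : 0 < n) (c : ℤ) :
    (Finset.Icc (1:ℤ) (n:ℤ)).filter (fun j => (n:ℤ) ∣ j - c) = {repr1 n c} := by
  ext j
  simp only [Finset.mem_filter, Finset.mem_singleton]
  constructor
  · rintro ⟨hj, hd⟩
    exact repr1_unique hn0 hj hd
  · rintro rfl
    exact ⟨repr1_mem hn0 c, repr1_dvd n c⟩

lemma sum_ite_single {n : ℕ} (hn0 : 0 < n) (c x : ℤ) :
    ∑ j ∈ Finset.Icc (1:ℤ) (n:ℤ), (if (n:ℤ) ∣ j - c then x else 0) = x := by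
  rw [← Finset.sum_filter, filter_dvd_eq_singleton hn0 c, Finset.sum_singleton]

lemma gFun_sum {n : ℕ} (hn0 : 0 < n) {a b : ℤ} (x y : ℤ) (hab : ¬ (n:ℤ) ∣ b - a) :
    ∑ j ∈ Finset.Icc (1:ℤ) (n:ℤ), gFun n a b x y j
      = (∑ j ∈ Finset.Icc (1:ℤ) (n:ℤ), j) + x + y := by
  have key : ∀ j : ℤ, gFun n a b x y j
      = j + ((if (n:ℤ) ∣ j - a then x else 0) + (if (n:ℤ) ∣ j - b then y else 0)) := by
    intro j
    unfold gFun
    by_cases h1 : (n:ℤ) ∣ j - a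
    · have h2 : ¬ (n:ℤ) ∣ j - b := by
        intro hd
        exact hab (by have := dvd_sub hd h1
                      rwa [show j - b - (j - a) = -(b - a) by ring, dvd_neg] at this)
      rw [if_pos h1, if_pos h1, if_neg h2]; ring
    · by_cases h2 : (n:ℤ) ∣ j - b
      · rw [if_neg h1, if_pos h2, if_neg h1, if_pos h2]; ring
      · rw [if_neg h1, if_neg h2, if_neg h1, if_neg h2]; ring
  rw [Finset.sum_congr rfl (fun j _ => key j), Finset.sum_add_distrib,
    Finset.sum_add_distrib, sum_ite_single hn0 a x, sum_ite_single hn0 b y, add_assoc]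

lemma isAffine_one {n : ℕ} : IsAffinePerm n (1 : Equiv.Perm ℤ) := ⟨fun _ => rfl, rfl⟩

lemma isAffine_sGen {n : ℕ} (hn : 2 ≤ n) (i : ℕ) : IsAffinePerm n (sGen n i) := by
  have hn1 := not_dvd_one hn
  refine ⟨per_sGen i, ?_⟩
  have h1 : ∀ j : ℤ, sGen n i j = gFun n (i:ℤ) ((i:ℤ) + 1) 1 (-1) j := by
    intro j; rw [sGen_apply hn1, sFun_eq_gFun]
  rw [Finset.sum_congr rfl (fun j _ => h1 j)]
  rw [gFun_sum (by omega) 1 (-1) (by rwa [add_sub_cancel_left])]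
  ring

lemma isAffine_tauPerm {n : ℕ} (hn : 2 ≤ n) (r r' : ℤ) : IsAffinePerm n (tauPerm n r r') := by
  refine ⟨per_tauPerm r r', ?_⟩
  by_cases h : (n:ℤ) ∣ r' - r
  · rw [tauPerm, dif_pos h]; rfl
  · have h1 : ∀ j : ℤ, tauPerm n r r' j = gFun n r r' (n:ℤ) (-(n:ℤ)) j :=
      fun j => tauPerm_apply h j
    rw [Finset.sum_congr rfl (fun j _ => h1 j)]
    rw [gFun_sum (by omega) (n:ℤ) (-(n:ℤ)) h]
    ring

lemma isAffine_mul {n : ℕ} (hn0 : 0 < n) {u v : Equiv.Perm ℤ}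
    (hu : IsAffinePerm n u) (hv : IsAffinePerm n v) : IsAffinePerm n (u * v) := by
  have hup : Per n u := hu.1
  have hvp : Per n v := hv.1
  refine ⟨hup.mul hvp, ?_⟩
  set f : ℤ → ℤ := fun i => repr1 n (v i) with hf
  have hfd : ∀ i : ℤ, (n:ℤ) ∣ f i - v i := fun i => repr1_dvd n (v i)
  have hstep : ∀ i : ℤ, u (v i) = u (f i) + (v i - f i) := by
    intro i
    obtain ⟨k, hk⟩ := hfd i
    have h1 : v i = f i + (n:ℤ) * (-k) := by linarith
    rw [h1, hup.zsmul (f i) (-k)]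
    ring
  have hinj : ∀ i ∈ Finset.Icc (1:ℤ) (n:ℤ), ∀ i' ∈ Finset.Icc (1:ℤ) (n:ℤ),
      f i = f i' → i = i' := by
    intro i hi i' hi' hff
    have hd : (n:ℤ) ∣ v i - v i' := by
      have := dvd_sub (hfd i) (hfd i')
      rw [hff] at this
      have h2 : (n:ℤ) ∣ -(v i - v i') := by
        rwa [show f i' - v i - (f i' - v i') = -(v i - v i') by ring] at this
      rwa [dvd_neg] at h2
    exact eq_of_mem_Icc_dvd hi hi' ((hvp.dvd_iff i i').mp hd)
  have himg : (Finset.Icc (1:ℤ) (n:ℤ)).image f = Finset.Icc (1:ℤ) (n:ℤ) := by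
    apply Finset.eq_of_subset_of_card_le
    · intro j hj
      obtain ⟨i, _, rfl⟩ := Finset.mem_image.mp hj
      exact repr1_mem hn0 (v i)
    · rw [Finset.card_image_of_injOn hinj]
  have hsum : ∀ g : ℤ → ℤ, ∑ i ∈ Finset.Icc (1:ℤ) (n:ℤ), g (f i)
      = ∑ j ∈ Finset.Icc (1:ℤ) (n:ℤ), g j := by
    intro g
    conv_rhs => rw [← himg]
    exact (Finset.sum_image hinj).symm
  calc ∑ i ∈ Finset.Icc (1:ℤ) (n:ℤ), (u * v) i
      = ∑ i ∈ Finset.Icc (1:ℤ) (n:ℤ), (u (f i) + (v i - f i)) :=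
        Finset.sum_congr rfl (fun i _ => hstep i)
    _ = (∑ i ∈ Finset.Icc (1:ℤ) (n:ℤ), u (f i))
        + ((∑ i ∈ Finset.Icc (1:ℤ) (n:ℤ), v i) - ∑ i ∈ Finset.Icc (1:ℤ) (n:ℤ), f i) := by
        rw [Finset.sum_add_distrib, Finset.sum_sub_distrib]
    _ = ∑ i ∈ Finset.Icc (1:ℤ) (n:ℤ), i := by
        have hsum2 : ∑ i ∈ Finset.Icc (1:ℤ) (n:ℤ), f i = ∑ j ∈ Finset.Icc (1:ℤ) (n:ℤ), j := by
          exact hsum (fun x => x)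
        rw [hsum u, hsum2, hu.2, hv.2]
        ring

lemma conj_tPerm {n : ℕ} {v : Equiv.Perm ℤ} (hv : Per n v) {a b : ℤ}
    (h : ¬ (n:ℤ) ∣ b - a) :
    v * tPerm n a b * v⁻¹ = tPerm n (v a) (v b) := by
  have h' : ¬ (n:ℤ) ∣ v b - v a := fun hd => h ((hv.dvd_iff b a).1 hd)
  apply Equiv.ext
  intro j
  have hj : v (v⁻¹ j) = j := Equiv.apply_symm_apply v j
  rw [Equiv.Perm.mul_apply, Equiv.Perm.mul_apply, tPerm_apply h, tPerm_apply h']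
  set i := v⁻¹ j with hi
  unfold tFun
  by_cases h1 : (n:ℤ) ∣ i - a
  · obtain ⟨k, hk⟩ := h1
    have hia : i = a + (n:ℤ) * k := by linarith
    have hja : j - v a = (n:ℤ) * k := by
      rw [← hj, hia, hv.zsmul a k]; ring
    rw [if_pos ⟨k, by linarith⟩, if_pos ⟨k, hja⟩]
    have e1 : i + (b - a) = b + (n:ℤ) * k := by rw [hia]; ring
    rw [e1, hv.zsmul b k]
    have e2 : j = v a + (n:ℤ) * k := by linarith
    rw [e2]; ring
  · by_cases h2 : (n:ℤ) ∣ i - b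
    · obtain ⟨k, hk⟩ := h2
      have hib : i = b + (n:ℤ) * k := by linarith
      have hjb : j - v b = (n:ℤ) * k := by
        rw [← hj, hib, hv.zsmul b k]; ring
      have hja : ¬ (n:ℤ) ∣ j - v a := by
        intro hd
        apply h1
        have : (n:ℤ) ∣ i - a := by
          rw [← hj] at hd
          exact (hv.dvd_iff i a).mp hd
        exact this
      rw [if_neg h1, if_pos ⟨k, hk⟩, if_neg hja, if_pos ⟨k, hjb⟩]
      have e1 : i - (b - a) = a + (n:ℤ) * k := by rw [hib]; ring
      rw [e1, hv.zsmul a k]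
      have e2 : j = v b + (n:ℤ) * k := by linarith
      rw [e2]; ring
    · have hja : ¬ (n:ℤ) ∣ j - v a := by
        intro hd; apply h1; rw [← hj] at hd; exact (hv.dvd_iff i a).mp hd
      have hjb : ¬ (n:ℤ) ∣ j - v b := by
        intro hd; apply h2; rw [← hj] at hd; exact (hv.dvd_iff i b).mp hd
      rw [if_neg h1, if_neg h2, if_neg hja, if_neg hjb]
      exact hj

lemma tPerm_symm {n : ℕ} {a b : ℤ} (h : ¬ (n:ℤ) ∣ b - a) : tPerm n a b = tPerm n b a := by
  have h' : ¬ (n:ℤ) ∣ a - b := fun hd => h (dvd_comm'.mp hd)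
  apply Equiv.ext; intro j
  rw [tPerm_apply h, tPerm_apply h']
  unfold tFun
  by_cases h1 : (n:ℤ) ∣ j - a
  · have h2 : ¬ (n:ℤ) ∣ j - b := by
      intro hd
      apply h
      have := dvd_sub hd h1
      rwa [show j - b - (j - a) = -(b - a) by ring, dvd_neg] at this
    rw [if_pos h1, if_neg h2, if_pos h1]; ring
  · by_cases h2 : (n:ℤ) ∣ j - b
    · rw [if_neg h1, if_pos h2, if_pos h2]; ring
    · rw [if_neg h1, if_neg h2, if_neg h2, if_neg h1]

lemma tPerm_congr {n : ℕ} {a a' b b' : ℤ} (ha : (n:ℤ) ∣ a' - a) (hd : b - a = b' - a') :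
    tPerm n a b = tPerm n a' b' := by
  by_cases h : (n:ℤ) ∣ b - a
  · rw [tPerm, tPerm, dif_pos h, dif_pos (show (n:ℤ) ∣ b' - a' by rwa [← hd])]
  · have h' : ¬ (n:ℤ) ∣ b' - a' := by rwa [← hd]
    apply Equiv.ext; intro j
    rw [tPerm_apply h, tPerm_apply h']
    unfold tFun
    have e1 : ((n:ℤ) ∣ j - a) ↔ ((n:ℤ) ∣ j - a') :=
      dvd_iff_dvd (by simp) (dvd_comm'.mp ha)
    have e2 : ((n:ℤ) ∣ j - b) ↔ ((n:ℤ) ∣ j - b') := by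
      refine dvd_iff_dvd (by simp) ?_
      have : b - b' = a - a' := by linarith
      rw [this]
      exact dvd_comm'.mp ha
    by_cases h1 : (n:ℤ) ∣ j - a
    · rw [if_pos h1, if_pos (e1.mp h1), hd]
    · by_cases h2 : (n:ℤ) ∣ j - b
      · rw [if_neg h1, if_pos h2, if_neg (fun hh => h1 (e1.mpr hh)), if_pos (e2.mp h2), hd]
      · rw [if_neg h1, if_neg h2, if_neg (fun hh => h1 (e1.mpr hh)),
          if_neg (fun hh => h2 (e2.mpr hh))]

/-- being a reflection of the affine symmetric group -/
def IsRefl (n : ℕ) (t : Equiv.Perm ℤ) : Prop :=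
  ∃ u : Equiv.Perm ℤ, IsAffinePerm n u ∧ ∃ i : ℕ, i ≤ n - 1 ∧ t = u * sGen n i * u⁻¹

lemma conj_step {n : ℕ} (hn : 2 ≤ n) {v t : Equiv.Perm ℤ} (hv : IsAffinePerm n v)
    (hr : IsRefl n t) : IsRefl n (v * t * v⁻¹) := by
  obtain ⟨u, hu, i, hi, rfl⟩ := hr
  refine ⟨v * u, isAffine_mul (by omega) hv hu, i, hi, ?_⟩
  rw [mul_inv_rev]
  group

lemma isRefl_adj {n : ℕ} (hn : 2 ≤ n) (a : ℤ) : IsRefl n (tPerm n a (a + 1)) := by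
  have hn1 := not_dvd_one hn
  have h0 : (0:ℤ) ≤ a % (n:ℤ) := Int.emod_nonneg a (by exact_mod_cast (by omega : n ≠ 0))
  have h2 : a % (n:ℤ) < (n:ℤ) := Int.emod_lt_of_pos a (by exact_mod_cast (by omega : 0 < n))
  refine ⟨1, isAffine_one, (a % (n:ℤ)).toNat, by omega, ?_⟩
  rw [one_mul, inv_one, mul_one, sGen_eq_tPerm hn1]
  have ha : (n:ℤ) ∣ (((a % (n:ℤ)).toNat : ℤ)) - a := by
    rw [Int.toNat_of_nonneg h0]
    exact ⟨-(a / (n:ℤ)), by rw [Int.emod_def]; ring⟩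
  exact tPerm_congr ha (by ring)

lemma key {n : ℕ} (hn : 2 ≤ n) : ∀ m : ℕ, ∀ a b : ℤ, b - a = (m:ℤ) → ¬ (n:ℤ) ∣ b - a →
    IsRefl n (tPerm n a b) := by
  have hn1 := not_dvd_one hn
  intro m
  induction m using Nat.strong_induction_on with
  | _ m ih =>
    intro a b hm hnd
    have hsplit : m = 0 ∨ m = 1 ∨ 2 ≤ m := by omega
    rcases hsplit with rfl | rfl | hm2
    · exfalso; apply hnd; rw [hm]; simp
    · have hb : b = a + 1 := by push_cast at hm; omega
      rw [hb]; exact isRefl_adj hn a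
    · by_cases hcase : (n:ℤ) ∣ (b - 1) - a
      · -- the difference is ≡ 1 mod n : use a τ-conjugation
        obtain ⟨k, hk⟩ := hcase
        have hm2' : (2:ℤ) ≤ (m:ℤ) := by exact_mod_cast hm2
        have hmk : (m:ℤ) - 1 = (n:ℤ) * k := by linarith
        have hk1 : 1 ≤ k := by
          by_contra hh
          push_neg at hh
          have h0 : (n:ℤ) * k ≤ (n:ℤ) * 0 :=
            mul_le_mul_of_nonneg_left (by omega) (by positivity)
          simp at h0
          linarith
        have hnd2 : ¬ (n:ℤ) ∣ (b - 2*(n:ℤ)) - a := by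
          intro hd
          apply hnd
          have := dvd_add hd ⟨2, rfl⟩
          rwa [show (b - 2*(n:ℤ)) - a + (n:ℤ)*2 = b - a by ring] at this
        have hr' : IsRefl n (tPerm n a (b - 2*(n:ℤ))) := by
          rcases lt_or_ge (2 * n) m with hgt | hle
          · apply ih (m - 2 * n) (by omega) a (b - 2*(n:ℤ)) ?_ hnd2
            rw [Nat.cast_sub (by omega : 2*n ≤ m)]
            push_cast
            omega
          · have hk2 : k ≤ 1 := by
              by_contra hh
              push_neg at hh
              have hA : (n:ℤ) * 2 ≤ (n:ℤ) * k :=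
                mul_le_mul_of_nonneg_left (by omega) (by positivity)
              have hB : (m:ℤ) ≤ 2 * (n:ℤ) := by exact_mod_cast hle
              linarith
            have hmeq : (m:ℤ) = (n:ℤ) + 1 := by
              have hke : k = 1 := le_antisymm hk2 hk1
              rw [hke] at hmk
              linarith
            have hswap : IsRefl n (tPerm n (b - 2*(n:ℤ)) a) := by
              apply ih (n - 1) (by omega) (b - 2*(n:ℤ)) a ?_ ?_
              · rw [Nat.cast_sub (by omega : 1 ≤ n)]
                omega
              · rw [show a - (b - 2*(n:ℤ)) = (n:ℤ) - 1 by omega]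
                intro hd
                apply hn1
                have := dvd_sub (dvd_refl (n:ℤ)) hd
                rwa [show (n:ℤ) - ((n:ℤ) - 1) = 1 by ring] at this
            rw [tPerm_symm hnd2]
            exact hswap
        have hab' : ¬ (n:ℤ) ∣ a - b := fun hd => hnd (dvd_comm'.mp hd)
        have hva : tauPerm n b a a = a - (n:ℤ) := by
          rw [tauPerm_apply hab']
          rw [gFun_eval_b _ _ (fun hd => hab' (by rwa [] at hd)) (by simp)]
          ring
        have hvb : tauPerm n b a (b - 2*(n:ℤ)) = b - (n:ℤ) := by
          rw [tauPerm_apply hab', gFun_eval_a _ _ _ ⟨-2, by ring⟩]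
          ring
        have hconj := conj_tPerm (per_tauPerm (n := n) b a) hnd2
        rw [hva, hvb] at hconj
        have hcg : tPerm n (a - (n:ℤ)) (b - (n:ℤ)) = tPerm n a b :=
          tPerm_congr ⟨1, by ring⟩ (by ring)
        rw [← hcg, ← hconj]
        exact conj_step hn (isAffine_tauPerm hn b a) hr'
      · -- conjugate by a simple generator to decrease the difference by 1
        have hr' : IsRefl n (tPerm n a (b - 1)) := by
          apply ih (m - 1) (by omega) a (b - 1) ?_ hcase
          rw [Nat.cast_sub (by omega : 1 ≤ m)]
          omega
        set c : ℕ := ((b - 1) % (n:ℤ)).toNat with hcdef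
        have hcz : (c:ℤ) = (b - 1) % (n:ℤ) :=
          Int.toNat_of_nonneg (Int.emod_nonneg _ (by exact_mod_cast (by omega : n ≠ 0)))
        have hcd : (n:ℤ) ∣ (c:ℤ) - (b - 1) := by
          rw [hcz, Int.emod_def]
          exact ⟨-((b-1) / (n:ℤ)), by ring⟩
        have hvb : sGen n c (b - 1) = b := by
          rw [sGen_apply hn1]
          unfold sFun
          rw [if_pos (dvd_comm'.mp hcd)]
          ring
        have hva : sGen n c a = a := by
          rw [sGen_apply hn1]
          unfold sFun
          have e1 : ¬ (n:ℤ) ∣ a - (c:ℤ) := by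
            intro hd
            apply hcase
            apply dvd_comm'.mp
            exact (dvd_iff_dvd (by simp) hcd).mp hd
          have e2 : ¬ (n:ℤ) ∣ a - ((c:ℤ) + 1) := by
            intro hd
            apply hnd
            apply dvd_comm'.mp
            have hy : (n:ℤ) ∣ ((c:ℤ) + 1) - b := by
              have := hcd
              rwa [show (c:ℤ) - (b - 1) = ((c:ℤ) + 1) - b by ring] at this
            exact (dvd_iff_dvd (by simp) hy).mp hd
          rw [if_neg e1, if_neg e2]
        have hconj := conj_tPerm (per_sGen (n := n) c) hcase
        rw [hva, hvb] at hconj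
        rw [← hconj]
        exact conj_step hn (isAffine_sGen hn c) hr'

lemma isRefl_tPerm {n : ℕ} (hn : 2 ≤ n) {a b : ℤ} (h : ¬ (n:ℤ) ∣ b - a) :
    IsRefl n (tPerm n a b) := by
  rcases lt_trichotomy (b - a) 0 with hlt | heq | hgt
  · rw [tPerm_symm h]
    exact key hn (a - b).toNat b a (by omega) (fun hd => h (dvd_comm'.mp hd))
  · exact absurd (heq ▸ dvd_zero (n:ℤ)) h
  · exact key hn (b - a).toNat a b (by omega) h

def movedF (n : ℕ) (w : Equiv.Perm ℤ) : Finset ℤ :=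
  (Finset.Icc (1:ℤ) (n:ℤ)).filter (fun j => w j ≠ j)

lemma movedF_one (n : ℕ) : movedF n 1 = ∅ := by
  simp [movedF]

lemma movedF_tPerm_card {n : ℕ} (hn0 : 0 < n) (a b : ℤ) :
    (movedF n (tPerm n a b)).card ≤ 2 := by
  by_cases h : (n:ℤ) ∣ b - a
  · rw [movedF, tPerm, dif_pos h]
    simp
  · have hsub : movedF n (tPerm n a b) ⊆ {repr1 n a, repr1 n b} := by
      intro j hj
      rw [movedF, Finset.mem_filter] at hj
      obtain ⟨hIcc, hne⟩ := hj
      rw [tPerm_apply h] at hne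
      unfold tFun at hne
      by_cases h1 : (n:ℤ) ∣ j - a
      · simp only [Finset.mem_insert, Finset.mem_singleton]
        exact Or.inl (repr1_unique hn0 hIcc h1)
      · by_cases h2 : (n:ℤ) ∣ j - b
        · simp only [Finset.mem_insert, Finset.mem_singleton]
          exact Or.inr (repr1_unique hn0 hIcc h2)
        · rw [if_neg h1, if_neg h2] at hne
          exact absurd rfl hne
    calc (movedF n (tPerm n a b)).card ≤ ({repr1 n a, repr1 n b} : Finset ℤ).card :=
          Finset.card_le_card hsub
      _ ≤ 2 := (Finset.card_insert_le _ _).trans (by simp)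

lemma movedF_mul_subset (n : ℕ) (u v : Equiv.Perm ℤ) :
    movedF n (u * v) ⊆ movedF n u ∪ movedF n v := by
  intro j hj
  rw [movedF, Finset.mem_filter] at hj
  obtain ⟨hIcc, hne⟩ := hj
  rw [Finset.mem_union, movedF, movedF, Finset.mem_filter, Finset.mem_filter]
  by_cases hv : v j = j
  · left
    refine ⟨hIcc, ?_⟩
    rwa [Equiv.Perm.mul_apply, hv] at hne
  · right; exact ⟨hIcc, hv⟩

lemma movedF_prod_card (n : ℕ) (l : List (Equiv.Perm ℤ))
    (h : ∀ x ∈ l, (movedF n x).card ≤ 2) :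
    (movedF n l.prod).card ≤ 2 * l.length := by
  induction l with
  | nil => simp [List.prod_nil, movedF_one]
  | cons x xs ih =>
    rw [List.prod_cons]
    calc (movedF n (x * xs.prod)).card
        ≤ (movedF n x ∪ movedF n xs.prod).card :=
          Finset.card_le_card (movedF_mul_subset n x xs.prod)
      _ ≤ (movedF n x).card + (movedF n xs.prod).card := Finset.card_union_le _ _
      _ ≤ 2 * (x :: xs).length := by
          have h1 := h x List.mem_cons_self
          have h2 := ih (fun y hy => h y (List.mem_cons_of_mem x hy))
          rw [List.length_cons]
          omega

lemma reflection_eq_tPerm {n : ℕ} (hn : 2 ≤ n) {u : Equiv.Perm ℤ} (hu : Per n u) (i : ℕ) :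
    u * sGen n i * u⁻¹ = tPerm n (u (i:ℤ)) (u ((i:ℤ)+1)) := by
  rw [sGen_eq_tPerm (not_dvd_one hn)]
  refine conj_tPerm hu ?_
  rw [add_sub_cancel_left]
  exact not_dvd_one hn

lemma upper {n : ℕ} (hn : 2 ≤ n) : ∀ m : ℕ, ∀ w : Equiv.Perm ℤ, Per n w → w * w = 1 →
    (movedF n w).card = m →
    ∃ l : List (Equiv.Perm ℤ),
      (∀ x ∈ l, ∃ u : Equiv.Perm ℤ, IsAffinePerm n u ∧
        ∃ i : ℕ, i ≤ n - 1 ∧ x = u * sGen n i * u⁻¹) ∧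
      l.prod = w ∧ l.length = m / 2 := by
  have hn1 := not_dvd_one hn
  have hn0 : 0 < n := by omega
  intro m
  induction m using Nat.strong_induction_on with
  | _ m ih =>
    intro w hper hinv hcard
    have hinv' : ∀ j : ℤ, w (w j) = j := by
      intro j
      have h := Equiv.Perm.mul_apply w w j
      rw [hinv] at h
      simpa using h.symm
    rcases Nat.eq_zero_or_pos m with rfl | hmpos
    · have hw1 : w = 1 := by
        apply Equiv.ext
        intro j
        have hfix : ∀ x ∈ Finset.Icc (1:ℤ) (n:ℤ), w x = x := by
          intro x hx
          by_contra hne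
          have hmem : x ∈ movedF n w := by
            rw [movedF, Finset.mem_filter]; exact ⟨hx, hne⟩
          rw [Finset.card_eq_zero] at hcard
          rw [hcard] at hmem
          exact absurd hmem (Finset.notMem_empty x)
        obtain ⟨k, hk⟩ := repr1_dvd n j
        have h1 : j = repr1 n j + (n:ℤ) * (-k) := by linarith
        rw [h1, hper.zsmul, hfix (repr1 n j) (repr1_mem hn0 j)]
        rfl
      exact ⟨[], by simp, by simp [hw1], by simp⟩
    · obtain ⟨a, ha⟩ := Finset.card_pos.mp (show 0 < (movedF n w).card by omega)
      rw [movedF, Finset.mem_filter] at ha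
      obtain ⟨haIcc, hane⟩ := ha
      set b : ℤ := w a with hb
      have hwb : w b = a := by rw [hb]; exact hinv' a
      have hab : ¬ (n:ℤ) ∣ b - a := by
        rintro ⟨k, hk⟩
        have h1 : b = a + (n:ℤ) * k := by linarith
        have h4 : a = b + (n:ℤ) * k := by
          rw [← hwb]
          conv_lhs => rw [h1, hper.zsmul a k]
        have h5 : (n:ℤ) * k = 0 := by linarith
        have h6 : b = a := by linarith
        exact hane (hb.symm.trans h6)
      set t := tPerm n a b with ht
      have hA1 : ∀ j k : ℤ, j = a + (n:ℤ)*k → (t * w) j = j := by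
        intro j k hjk
        rw [Equiv.Perm.mul_apply]
        have hwj : w j = b + (n:ℤ)*k := by rw [hjk, hper.zsmul]
        rw [hwj, tPerm_apply hab]
        have hc1 : ¬ (n:ℤ) ∣ (b + (n:ℤ)*k) - a := by
          intro hd
          apply hab
          have h2 := dvd_sub hd ⟨k, rfl⟩
          rwa [show b + (n:ℤ)*k - a - (n:ℤ)*k = b - a by ring] at h2
        have hc2 : (n:ℤ) ∣ (b + (n:ℤ)*k) - b := ⟨k, by ring⟩
        unfold tFun
        rw [if_neg hc1, if_pos hc2, hjk]
        ring
      have hA2 : ∀ j k : ℤ, j = b + (n:ℤ)*k → (t * w) j = j := by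
        intro j k hjk
        rw [Equiv.Perm.mul_apply]
        have hwj : w j = a + (n:ℤ)*k := by rw [hjk, hper.zsmul, hwb]
        rw [hwj, tPerm_apply hab]
        unfold tFun
        have hcc : (n:ℤ) ∣ (a + (n:ℤ)*k) - a := ⟨k, by ring⟩
        rw [if_pos hcc, hjk]
        ring
      have hB : ∀ j : ℤ, ¬ (n:ℤ) ∣ j - a → ¬ (n:ℤ) ∣ j - b →
          (t * w) j = w j ∧ ¬ (n:ℤ) ∣ w j - a ∧ ¬ (n:ℤ) ∣ w j - b := by
        intro j h1 h2
        have hc1 : ¬ (n:ℤ) ∣ w j - a := by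
          rintro ⟨k, hk⟩
          apply h2
          have h3 : w j = a + (n:ℤ)*k := by linarith
          have h5 := hinv' j
          rw [h3, hper.zsmul a k] at h5
          have h7 : w a = b := hb.symm
          rw [h7] at h5
          exact ⟨k, by linarith⟩
        have hc2 : ¬ (n:ℤ) ∣ w j - b := by
          rintro ⟨k, hk⟩
          apply h1
          have h3 : w j = b + (n:ℤ)*k := by linarith
          have h5 := hinv' j
          rw [h3, hper.zsmul b k, hwb] at h5
          exact ⟨k, by linarith⟩
        refine ⟨?_, hc1, hc2⟩
        rw [Equiv.Perm.mul_apply, tPerm_apply hab]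
        unfold tFun
        rw [if_neg hc1, if_neg hc2]
      set w' := t * w with hw'
      have hper' : Per n w' := (per_tPerm a b).mul hper
      have hinv2 : w' * w' = 1 := by
        apply Equiv.ext
        intro j
        rw [Equiv.Perm.mul_apply]
        by_cases h1 : (n:ℤ) ∣ j - a
        · obtain ⟨k, hk⟩ := h1
          have hjk : j = a + (n:ℤ)*k := by linarith
          rw [hA1 j k hjk, hA1 j k hjk]
          rfl
        · by_cases h2 : (n:ℤ) ∣ j - b
          · obtain ⟨k, hk⟩ := h2
            have hjk : j = b + (n:ℤ)*k := by linarith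
            rw [hA2 j k hjk, hA2 j k hjk]
            rfl
          · obtain ⟨he, hc1, hc2⟩ := hB j h1 h2
            rw [he]
            obtain ⟨he2, _, _⟩ := hB (w j) hc1 hc2
            rw [he2, hinv' j]
            rfl
      have hrb : repr1 n b ∈ Finset.Icc (1:ℤ) (n:ℤ) := repr1_mem hn0 b
      have hbne : b ≠ a := fun h => hane (hb.symm.trans h)
      have hmove : movedF n w' = movedF n w \ {a, repr1 n b} := by
        ext j
        simp only [movedF, Finset.mem_filter, Finset.mem_sdiff, Finset.mem_insert,
          Finset.mem_singleton]
        constructor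
        · rintro ⟨hIcc, hne⟩
          by_cases h1 : (n:ℤ) ∣ j - a
          · exfalso
            obtain ⟨k, hk⟩ := h1
            exact hne (hA1 j k (by linarith))
          · by_cases h2 : (n:ℤ) ∣ j - b
            · exfalso
              obtain ⟨k, hk⟩ := h2
              exact hne (hA2 j k (by linarith))
            · obtain ⟨he, _, _⟩ := hB j h1 h2
              refine ⟨⟨hIcc, by rwa [he] at hne⟩, ?_⟩
              rintro (rfl | rfl)
              · exact h1 (by simp)
              · exact h2 (repr1_dvd n b)
        · rintro ⟨⟨hIcc, hne⟩, hnot⟩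
          push_neg at hnot
          obtain ⟨hna, hnrb⟩ := hnot
          have h1 : ¬ (n:ℤ) ∣ j - a := fun hd => hna (eq_of_mem_Icc_dvd hIcc haIcc hd)
          have h2 : ¬ (n:ℤ) ∣ j - b := fun hd => hnrb (repr1_unique hn0 hIcc hd)
          obtain ⟨he, _, _⟩ := hB j h1 h2
          exact ⟨hIcc, by rwa [he]⟩
      have hrbmem : repr1 n b ∈ movedF n w := by
        rw [movedF, Finset.mem_filter]
        refine ⟨hrb, ?_⟩
        obtain ⟨k, hk⟩ := repr1_dvd n b
        have h1 : repr1 n b = b + (n:ℤ)*k := by linarith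
        rw [h1, hper.zsmul, hwb]
        intro hh
        exact hbne (by linarith)
      have hamem : a ∈ movedF n w := by
        rw [movedF, Finset.mem_filter]; exact ⟨haIcc, hane⟩
      have hanerb : a ≠ repr1 n b := by
        intro hh
        apply hab
        apply dvd_comm'.mp
        rw [hh]
        exact repr1_dvd n b
      have hsub2 : ({a, repr1 n b} : Finset ℤ) ⊆ movedF n w := by
        intro x hx
        rcases Finset.mem_insert.mp hx with rfl | hx2
        · exact hamem
        · rw [Finset.mem_singleton] at hx2; rw [hx2]; exact hrbmem
      have hcard2 : ({a, repr1 n b} : Finset ℤ).card = 2 := by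
        rw [Finset.card_insert_of_notMem (by simpa using hanerb), Finset.card_singleton]
      have hm2 : 2 ≤ m := by
        rw [← hcard]
        calc 2 = ({a, repr1 n b} : Finset ℤ).card := hcard2.symm
          _ ≤ (movedF n w).card := Finset.card_le_card hsub2
      have hcard' : (movedF n w').card = m - 2 := by
        rw [hmove, Finset.card_sdiff_of_subset hsub2, hcard, hcard2]
      obtain ⟨l', hl'refl, hl'prod, hl'len⟩ := ih (m - 2) (by omega) w' hper' hinv2 hcard'
      refine ⟨t :: l', ?_, ?_, ?_⟩
      · intro x hx
        rcases List.mem_cons.mp hx with rfl | hx2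
        · obtain ⟨u, hu, i, hi, he⟩ := isRefl_tPerm hn hab
          exact ⟨u, hu, i, hi, he⟩
        · exact hl'refl x hx2
      · rw [List.prod_cons, hl'prod, hw', ← mul_assoc, tPerm_mul_self hab, one_mul]
      · rw [List.length_cons, hl'len]
        omega

end AffAux

/-- The length of `w ∈ S̃_n`: the number of pairs `(i, j)` with `i < j`, `1 ≤ j ≤ n`
and `w i > w j`. -/
def ellA (n : ℕ) (w : Equiv.Perm ℤ) : ℕ :=
  Set.ncard {p : ℤ × ℤ | p.1 < p.2 ∧ 1 ≤ p.2 ∧ p.2 ≤ (n : ℤ) ∧ w p.2 < w p.1}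

/-- The absolute length of an involution `w ∈ S̃_n`:
`(n − #{i ∈ {1,…,n} : w i = i}) / 2`. -/
def ellAbs (n : ℕ) (w : Equiv.Perm ℤ) : ℕ :=
  (n - Set.ncard {i : ℤ | 1 ≤ i ∧ i ≤ (n : ℤ) ∧ w i = i}) / 2

/-- `Ω_n`: involutions in `S̃_n` which are minimal length double coset representatives
for the parabolic subgroup generated by `s_1, …, s_{n-1}`. -/
def OmegaSet (n : ℕ) : Set (Equiv.Perm ℤ) :=
  {w | IsAffinePerm n w ∧ w * w = 1 ∧
    ∀ i : ℕ, 1 ≤ i → i ≤ n - 1 →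
      ellA n (sGen n i * w) = ellA n w + 1 ∧ ellA n (w * sGen n i) = ellA n w + 1}

/-- Inverse of a power series with constant term `1` (via `invOfUnit`). -/
def pinv (f : PowerSeries ℤ) : PowerSeries ℤ := PowerSeries.invOfUnit f 1

/-- Substitution of `q ↦ q²` in a power series: `(sq2 f)(q) = f(q²)`. -/
def sq2 (f : PowerSeries ℤ) : PowerSeries ℤ :=
  PowerSeries.mk fun j => if 2 ∣ j then PowerSeries.coeff (j / 2) f else 0

/-- The `q`-integer `[m]_q = 1 + q + ⋯ + q^{m-1}` as a power series. -/
def qInt (m : ℕ) : PowerSeries ℤ := ∑ i ∈ Finset.range m, (PowerSeries.X : PowerSeries ℤ) ^ i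

/-- The `q`-factorial `[m]_q!`. -/
def qFact (m : ℕ) : PowerSeries ℤ := ∏ k ∈ Finset.range m, qInt (k + 1)

/-- The Gaussian binomial coefficient `binom(m, k)_q = [m]_q!/([k]_q![m-k]_q!)`. -/
def qBinom (m k : ℕ) : PowerSeries ℤ := qFact m * pinv (qFact k * qFact (m - k))

/-- The `q`-Pochhammer symbol `(−q^{k+1}; q)_m = ∏_{j=0}^{m-1} (1 + q^{k+1+j})`. -/
def qPochNeg (k m : ℕ) : PowerSeries ℤ :=
  ∏ j ∈ Finset.range m, (1 + (PowerSeries.X : PowerSeries ℤ) ^ (k + 1 + j))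

/-- The Poincaré series `P̃_n(q) = ∑_{w ∈ S̃_n} q^{ℓ(w)}`, defined coefficientwise:
the coefficient of `q^j` is the (finite) number of `w ∈ S̃_n` with `ℓ(w) = j`. -/
def Ptilde (n : ℕ) : PowerSeries ℤ :=
  PowerSeries.mk fun j =>
    (Nat.card {w : Equiv.Perm ℤ // IsAffinePerm n w ∧ ellA n w = j} : ℤ)

/-- The generating set `{s_i : i ∈ K_w}` where
`K_w = {i ∈ {1,…,n−1} : w s_i w ∈ {s_1,…,s_{n−1}}}`. -/
def Kgens (n : ℕ) (w : Equiv.Perm ℤ) : Set (Equiv.Perm ℤ) :=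
  {y | ∃ i : ℕ, 1 ≤ i ∧ i ≤ n - 1 ∧ y = sGen n i ∧
      ∃ j : ℕ, 1 ≤ j ∧ j ≤ n - 1 ∧ w * sGen n i * w = sGen n j}

/-- `F_w(q) = ∑_{x ∈ W_{K_w}, w x w = x} q^{ℓ(x)}`, defined coefficientwise. -/
def Fw (n : ℕ) (w : Equiv.Perm ℤ) : PowerSeries ℤ :=
  PowerSeries.mk fun j =>
    (Nat.card {x : Equiv.Perm ℤ //
        x ∈ Subgroup.closure (Kgens n w) ∧ w * x * w = x ∧ ellA n x = j} : ℤ)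

/-- The `q`-part of the summand of `T_n(s,q)` attached to `w ∈ Ω_n`:
`q^{ℓ(w)} ((1−q)/(1+q))^{ℓ'(w)} P_n(q²) / F_w(q)`. -/
def termW (n : ℕ) (w : Equiv.Perm ℤ) : PowerSeries ℤ :=
  (PowerSeries.X : PowerSeries ℤ) ^ ellA n w *
    ((1 - PowerSeries.X) * pinv (1 + PowerSeries.X)) ^ ellAbs n w *
    sq2 (qFact n) * pinv (Fw n w)

/-- The coefficient of `s^k` in `∑_{w ∈ Ω_n} q^{ℓ(w)} (s(1−q)/(1+q))^{ℓ'(w)} P_n(q²)/F_w(q)`,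
computed coefficientwise in `q` (the sum over `w` converges coefficientwise). -/
def innerSum (n k : ℕ) : PowerSeries ℤ :=
  PowerSeries.mk fun j =>
    ∑' w : {w : Equiv.Perm ℤ // w ∈ OmegaSet n ∧ ellAbs n w = k},
      PowerSeries.coeff j (termW n w.1)

/-- The power series `T_n(s, q) ∈ ℤ[[s, q]]`, realized as an element of `(ℤ[[q]])[[s]]`:
`T_n(s,q) = (P̃_n(q)/P̃_n(q²)) ∑_{w ∈ Ω_n} q^{ℓ(w)} (s(1−q)/(1+q))^{ℓ'(w)} P_n(q²)/F_w(q)`. -/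
def Tser (n : ℕ) : PowerSeries (PowerSeries ℤ) :=
  PowerSeries.mk fun k => Ptilde n * pinv (sq2 (Ptilde n)) * innerSum n k

end

/-- Let `n ≥ 2` and let `R = {u s_i u⁻¹ : u ∈ S̃_n, 0 ≤ i ≤ n−1}` be the set
of reflections of `S̃_n`. For every involution `w ∈ S̃_n`, the minimal number `k` of reflections
whose product is `w` (with `k = 0` for `w = 1`, via the empty product) equals
`(n − #{i ∈ {1,…,n} : w i = i})/2`. -/
theorem statement9 (n : ℕ) (hn : 2 ≤ n) (w : Equiv.Perm ℤ)
    (hw : IsAffinePerm n w) (hinv : w * w = 1) :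
    sInf {k : ℕ | ∃ l : List (Equiv.Perm ℤ),
        (∀ x ∈ l, ∃ u : Equiv.Perm ℤ, IsAffinePerm n u ∧
          ∃ i : ℕ, i ≤ n - 1 ∧ x = u * sGen n i * u⁻¹) ∧
        l.prod = w ∧ l.length = k} =
      (n - Set.ncard {i : ℤ | 1 ≤ i ∧ i ≤ (n : ℤ) ∧ w i = i}) / 2 := by
  classical
  have hper : AffAux.Per n w := hw.1
  have hfixset : {i : ℤ | 1 ≤ i ∧ i ≤ (n : ℤ) ∧ w i = i}
      = ↑((Finset.Icc (1:ℤ) (n:ℤ)).filter (fun j => w j = j)) := by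
    ext j
    simp [Finset.mem_Icc, and_assoc]
  have hfixcard : Set.ncard {i : ℤ | 1 ≤ i ∧ i ≤ (n : ℤ) ∧ w i = i}
      = ((Finset.Icc (1:ℤ) (n:ℤ)).filter (fun j => w j = j)).card := by
    rw [hfixset, Set.ncard_coe_finset]
  have hIccCard : (Finset.Icc (1:ℤ) (n:ℤ)).card = n := by
    rw [Int.card_Icc]
    simp
  have hsplit : ((Finset.Icc (1:ℤ) (n:ℤ)).filter (fun j => w j = j)).card
      + (AffAux.movedF n w).card = n := by
    have h0 := Finset.card_filter_add_card_filter_not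
      (s := Finset.Icc (1:ℤ) (n:ℤ)) (p := fun j => w j = j)
    rw [hIccCard] at h0
    simp only [AffAux.movedF, ne_eq]
    exact h0
  have hmoved : (AffAux.movedF n w).card
      = n - Set.ncard {i : ℤ | 1 ≤ i ∧ i ≤ (n : ℤ) ∧ w i = i} := by
    rw [hfixcard]; omega
  obtain ⟨l, hlr, hlp, hll⟩ :=
    AffAux.upper hn ((AffAux.movedF n w).card) w hper hinv rfl
  apply le_antisymm
  · apply Nat.sInf_le
    exact ⟨l, hlr, hlp, by rw [hll, hmoved]⟩
  · apply le_csInf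
    · exact ⟨l.length, l, hlr, hlp, rfl⟩
    rintro k ⟨l2, hl2r, hl2p, hl2len⟩
    have hb : ∀ x ∈ l2, (AffAux.movedF n x).card ≤ 2 := by
      intro x hx
      obtain ⟨u, hu, i, hi, rfl⟩ := hl2r x hx
      rw [AffAux.reflection_eq_tPerm hn hu.1 i]
      exact AffAux.movedF_tPerm_card (by omega) _ _
    have hlow := AffAux.movedF_prod_card n l2 hb
    rw [hl2p, hl2len] at hlow
    omega
end

section
/- For every integer n ≥ 2, the map w ↦ λ(w) is a bijection from Ω'_n onto the set of weakly increasing integer sequences of length n whose terms sum to zero, i.e. onto {a ∈ ℤⁿ : a_1 ≤ a_2 ≤ ⋯ ≤ a_n and Σ_{i=1}^n a_i = 0}. -/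
open scoped Classical

lemma tau_aux (n : ℕ) : ∀ i : ℤ, (n : ℤ) + 1 - ((n : ℤ) + 1 - i) = i := fun i => by ring

/-- The bijection `τ_n : ℤ → ℤ`, `i ↦ n + 1 − i`. -/
def tauN (n : ℕ) : Equiv.Perm ℤ :=
  ⟨fun i => (n : ℤ) + 1 - i, fun i => (n : ℤ) + 1 - i, tau_aux n, tau_aux n⟩

/-- `λ(w) ∈ ℤⁿ`, where `λ_i(w) = ⌊(w(i) − 1)/n⌋` for `i ∈ {1, …, n}`
(indexed here by `i : Fin n`, standing for the position `i + 1`). -/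
noncomputable def lam (n : ℕ) (w : Equiv.Perm ℤ) : Fin n → ℤ :=
  fun i => Int.fdiv (w (((i : ℕ) : ℤ) + 1) - 1) (n : ℤ)

/-- `Ω'_n`: the set of `*`-twisted involutions in `S̃_n` (i.e. `(τ_n ∘ w)² = id`) that are
minimal length double coset representatives for the subgroup generated by `s_1, …, s_{n−1}`. -/
def Omega'Set (n : ℕ) : Set (Equiv.Perm ℤ) :=
  {w | IsAffinePerm n w ∧ (tauN n * w) * (tauN n * w) = 1 ∧
    ∀ i : ℕ, 1 ≤ i → i ≤ n - 1 →
      ellA n (sGen n i * w) = ellA n w + 1 ∧ ellA n (w * sGen n i) = ellA n w + 1}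



namespace S12

lemma not_dvd_one {n : ℕ} (hn : 2 ≤ n) : ¬ (n : ℤ) ∣ 1 := by
  intro h
  have := Int.le_of_dvd one_pos h
  omega

lemma dvd_bounded_zero {n : ℕ} {z : ℤ} (h : (n : ℤ) ∣ z) (h1 : -(n:ℤ) < z) (h2 : z < n) :
    z = 0 := by
  by_contra hz
  rcases lt_or_gt_of_ne hz with hl | hg
  · have : (n:ℤ) ≤ -z := Int.le_of_dvd (by omega) (dvd_neg.mpr h)
    omega
  · have : (n:ℤ) ≤ z := Int.le_of_dvd hg h
    omega

lemma aff_apply {n : ℕ} {w : Equiv.Perm ℤ} (hw : ∀ i : ℤ, w (i + (n:ℤ)) = w i + (n:ℤ))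
    (k i : ℤ) : w (i + k * n) = w i + k * n := by
  induction k using Int.induction_on with
  | zero => simp
  | succ m ih =>
      have h1 : i + ((m : ℤ) + 1) * n = (i + m * n) + n := by ring
      rw [h1, hw, ih]; ring
  | pred m ih =>
      have h1 : i + (-(m:ℤ) - 1) * n + n = i + (-(m:ℤ)) * n := by ring
      have := hw (i + (-(m:ℤ) - 1) * n)
      rw [h1, ih] at this
      omega

lemma aff_symm_apply {n : ℕ} {w : Equiv.Perm ℤ} (hw : ∀ i : ℤ, w (i + (n:ℤ)) = w i + (n:ℤ))
    (k i : ℤ) : w.symm (i + k * n) = w.symm i + k * n := by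
  apply w.injective
  rw [Equiv.apply_symm_apply, aff_apply hw, Equiv.apply_symm_apply]

lemma window_unique {n : ℕ} {j j' k : ℤ} (h1 : 1 ≤ j) (h2 : j ≤ n) (h3 : 1 ≤ j')
    (h4 : j' ≤ n) (h : j' = j + k * n) : k = 0 := by
  rcases lt_trichotomy k 0 with hk | hk | hk
  · nlinarith
  · exact hk
  · nlinarith

/-- every integer has a window representative -/
lemma window_rep (n : ℕ) (hn : 0 < n) (j : ℤ) :
    ∃ k : ℤ, 1 ≤ j - k * n ∧ j - k * n ≤ n := by
  refine ⟨(j - 1) / n, ?_, ?_⟩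
  · have := Int.emod_nonneg (j - 1) (by positivity : (n:ℤ) ≠ 0)
    have h2 := Int.mul_ediv_add_emod (j - 1) n
    have h3 : (j-1) / (n:ℤ) * n = n * ((j-1)/n) := mul_comm _ _
    omega
  · have := Int.emod_lt_of_pos (j - 1) (by positivity : (0:ℤ) < n)
    have h2 := Int.mul_ediv_add_emod (j - 1) n
    have h3 : (j-1) / (n:ℤ) * n = n * ((j-1)/n) := mul_comm _ _
    omega

lemma inv_finite {n : ℕ} (hn : 0 < n) {w : Equiv.Perm ℤ} (hw : IsAffinePerm n w) :
    {p : ℤ × ℤ | p.1 < p.2 ∧ 1 ≤ p.2 ∧ p.2 ≤ (n:ℤ) ∧ w p.2 < w p.1}.Finite := by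
  set B : ℤ := ∑ j ∈ Finset.Icc (1:ℤ) (n:ℤ), |w j - j| with hB
  have hbd : ∀ j : ℤ, |w j - j| ≤ B := by
    intro j
    obtain ⟨k, hk1, hk2⟩ := window_rep n hn j
    have hper : w j = w (j - k * n) + k * n := by
      have := aff_apply hw.1 k (j - k * n)
      simpa using this
    have : |w j - j| = |w (j - k*n) - (j - k*n)| := by
      rw [hper]; ring_nf
    rw [this]
    exact Finset.single_le_sum (f := fun j => |w j - j|) (fun x _ => abs_nonneg _)
      (Finset.mem_Icc.mpr ⟨hk1, hk2⟩)
  apply Set.Finite.subset (Set.finite_Icc (1 - 2*B - 2) (n:ℤ) |>.prod (Set.finite_Icc (1:ℤ) (n:ℤ)))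
  rintro ⟨a, b⟩ ⟨h1, h2, h3, h4⟩
  dsimp only at h1 h2 h3 h4
  have ha := hbd a
  have hb := hbd b
  rw [abs_le] at ha hb
  constructor
  · simp only [Set.mem_Icc]; constructor <;> omega
  · simp only [Set.mem_Icc]; exact ⟨h2, h3⟩

end S12


namespace S12

variable {n : ℕ}

lemma sGen_apply (hn : 2 ≤ n) (i : ℕ) (j : ℤ) : sGen n i j = sFun n i j := by
  rw [sGen, dif_neg (not_dvd_one hn)]; rfl

lemma sGen_sq (hn : 2 ≤ n) (i : ℕ) : sGen n i * sGen n i = 1 := by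
  ext j
  rw [Equiv.Perm.mul_apply, sGen_apply hn, sGen_apply hn, sFun_invol n i (not_dvd_one hn) j]
  rfl

lemma sFun_flip1 (hn : 2 ≤ n) {i : ℕ} {x : ℤ} (d1 : (n:ℤ) ∣ x - i) : sFun n i x = x + 1 := by
  rw [sFun, if_pos d1]

lemma sFun_flip2 (hn : 2 ≤ n) {i : ℕ} {x : ℤ} (d1 : (n:ℤ) ∣ x - i) : sFun n i (x + 1) = x := by
  have h1 : ¬ (n:ℤ) ∣ (x+1) - i := by
    intro h
    have : (n:ℤ) ∣ 1 := by
      have := dvd_sub h d1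
      simpa using this
    exact not_dvd_one hn this
  have h2 : (n:ℤ) ∣ (x+1) - ((i:ℤ)+1) := by
    have : (x+1) - ((i:ℤ)+1) = x - i := by ring
    rw [this]; exact d1
  rw [sFun, if_neg h1, if_pos h2]
  ring

lemma sFun_lt (hn : 2 ≤ n) {i : ℕ} {x y : ℤ} (hxy : x < y)
    (hex : ¬((n:ℤ) ∣ x - i ∧ y = x + 1)) : sFun n i x < sFun n i y := by
  have hnd := not_dvd_one hn
  unfold sFun
  by_cases d1 : (n:ℤ) ∣ x - i
  · rw [if_pos d1]
    by_cases e1 : (n:ℤ) ∣ y - i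
    · rw [if_pos e1]; omega
    · rw [if_neg e1]
      by_cases e2 : (n:ℤ) ∣ y - ((i:ℤ)+1)
      · rw [if_pos e2]
        -- n ∣ y - x - 1, y ≠ x+1
        have hd : (n:ℤ) ∣ (y - ((i:ℤ)+1)) - (x - i) := dvd_sub e2 d1
        have heq : (y - ((i:ℤ)+1)) - (x - i) = y - x - 1 := by ring
        rw [heq] at hd
        have hne : y ≠ x + 1 := fun h => hex ⟨d1, h⟩
        have : (n:ℤ) ≤ y - x - 1 := Int.le_of_dvd (by omega) hd
        omega
      · rw [if_neg e2]
        -- y ≥ x + 2 : else y = x+1 and y - (i+1) = x - i divisible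
        have : y ≠ x + 1 := by
          intro h
          apply e2
          have : y - ((i:ℤ)+1) = x - i := by omega
          rw [this]; exact d1
        omega
  · rw [if_neg d1]
    by_cases d2 : (n:ℤ) ∣ x - ((i:ℤ)+1)
    · rw [if_pos d2]
      by_cases e1 : (n:ℤ) ∣ y - i
      · rw [if_pos e1]; omega
      · rw [if_neg e1]
        by_cases e2 : (n:ℤ) ∣ y - ((i:ℤ)+1)
        · rw [if_pos e2]
          have hd : (n:ℤ) ∣ (y - ((i:ℤ)+1)) - (x - ((i:ℤ)+1)) := dvd_sub e2 d2
          have heq : (y - ((i:ℤ)+1)) - (x - ((i:ℤ)+1)) = y - x := by ring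
          rw [heq] at hd
          have : (n:ℤ) ≤ y - x := Int.le_of_dvd (by omega) hd
          omega
        · rw [if_neg e2]; omega
    · rw [if_neg d2]
      by_cases e1 : (n:ℤ) ∣ y - i
      · rw [if_pos e1]; omega
      · rw [if_neg e1]
        by_cases e2 : (n:ℤ) ∣ y - ((i:ℤ)+1)
        · rw [if_pos e2]
          have : y - 1 ≠ x := by
            intro h
            apply d1
            have : x - i = y - ((i:ℤ)+1) := by omega
            rw [this]; exact e2
          omega
        · rw [if_neg e2]; omega

lemma sFun_window {i : ℕ} (hi1 : 1 ≤ i) (hi2 : i ≤ n - 1) (hn : 2 ≤ n) {j : ℤ}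
    (hj1 : 1 ≤ j) (hj2 : j ≤ n) : 1 ≤ sFun n i j ∧ sFun n i j ≤ n := by
  have hi2' : (i:ℤ) ≤ (n:ℤ) - 1 := by omega
  have hi1' : 1 ≤ (i:ℤ) := by omega
  unfold sFun
  by_cases d1 : (n:ℤ) ∣ j - i
  · have : j - (i:ℤ) = 0 := dvd_bounded_zero d1 (by omega) (by omega)
    rw [if_pos d1]; omega
  · rw [if_neg d1]
    by_cases d2 : (n:ℤ) ∣ j - ((i:ℤ)+1)
    · have : j - ((i:ℤ)+1) = 0 := dvd_bounded_zero d2 (by omega) (by omega)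
      rw [if_pos d2]; omega
    · rw [if_neg d2]; omega

end S12


namespace S12

variable {n : ℕ}

lemma sFun_per (i : ℕ) (j : ℤ) : sFun n i (j + n) = sFun n i j + n := by
  have e1 : j + (n:ℤ) - i = (j - i) + n := by ring
  have e2 : j + (n:ℤ) - ((i:ℤ)+1) = (j - ((i:ℤ)+1)) + n := by ring
  have k1 : ((n:ℤ) ∣ j + n - i) ↔ ((n:ℤ) ∣ j - i) := by
    rw [e1]
    constructor
    · intro h; have := dvd_sub h (dvd_refl (n:ℤ)); simpa using this
    · intro h; exact dvd_add h (dvd_refl _)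
  have k2 : ((n:ℤ) ∣ j + n - ((i:ℤ)+1)) ↔ ((n:ℤ) ∣ j - ((i:ℤ)+1)) := by
    rw [e2]
    constructor
    · intro h; have := dvd_sub h (dvd_refl (n:ℤ)); simpa using this
    · intro h; exact dvd_add h (dvd_refl _)
  unfold sFun
  by_cases d1 : (n:ℤ) ∣ j - i
  · rw [if_pos d1, if_pos (k1.mpr d1)]; ring
  · rw [if_neg d1, if_neg (fun h => d1 (k1.mp h))]
    by_cases d2 : (n:ℤ) ∣ j - ((i:ℤ)+1)
    · rw [if_pos d2, if_pos (k2.mpr d2)]; ring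
    · rw [if_neg d2, if_neg (fun h => d2 (k2.mp h))]

lemma aff_mul_sGen (hn : 2 ≤ n) {w : Equiv.Perm ℤ} (hw : IsAffinePerm n w) {i : ℕ}
    (hi1 : 1 ≤ i) (hi2 : i ≤ n - 1) : IsAffinePerm n (w * sGen n i) := by
  have hnd := not_dvd_one hn
  constructor
  · intro j
    rw [Equiv.Perm.mul_apply, Equiv.Perm.mul_apply, sGen_apply hn, sGen_apply hn,
      sFun_per, hw.1]
  · have : ∑ j ∈ Finset.Icc (1:ℤ) (n:ℤ), (w * sGen n i) j
        = ∑ j ∈ Finset.Icc (1:ℤ) (n:ℤ), w j := by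
      refine Finset.sum_nbij' (sFun n i) (sFun n i) ?_ ?_ ?_ ?_ ?_
      · intro a ha
        rw [Finset.mem_Icc] at ha ⊢
        exact sFun_window hi1 hi2 hn ha.1 ha.2
      · intro a ha
        rw [Finset.mem_Icc] at ha ⊢
        exact sFun_window hi1 hi2 hn ha.1 ha.2
      · intro a _; exact sFun_invol n i hnd a
      · intro a _; exact sFun_invol n i hnd a
      · intro a _
        rw [Equiv.Perm.mul_apply, sGen_apply hn]
    rw [this]; exact hw.2

lemma ellA_right (hn : 2 ≤ n) {w : Equiv.Perm ℤ} (hw : IsAffinePerm n w) {i : ℕ}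
    (hi1 : 1 ≤ i) (hi2 : i ≤ n - 1)
    (hlt : w (i:ℤ) < w ((i:ℤ)+1)) : ellA n (w * sGen n i) = ellA n w + 1 := by
  have hnd := not_dvd_one hn
  have hin : (i:ℤ) ≤ (n:ℤ) - 1 := by omega
  have hi1' : 1 ≤ (i:ℤ) := by omega
  have hs : ∀ j, (w * sGen n i) j = w (sFun n i j) := fun j => by
    rw [Equiv.Perm.mul_apply, sGen_apply hn]
  have hdii : (n:ℤ) ∣ (i:ℤ) - (i:ℤ) := by simp
  have hfin : {p : ℤ × ℤ | p.1 < p.2 ∧ 1 ≤ p.2 ∧ p.2 ≤ (n:ℤ) ∧ w p.2 < w p.1}.Finite :=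
    inv_finite (by omega) hw
  have hinj : Function.Injective (fun p : ℤ × ℤ => (sFun n i p.1, sFun n i p.2)) := by
    intro p q h
    have h1 := congrArg Prod.fst h
    have h2 := congrArg Prod.snd h
    simp only at h1 h2
    exact Prod.ext ((sFun_invol n i hnd).injective h1) ((sFun_invol n i hnd).injective h2)
  have key : {p : ℤ × ℤ | p.1 < p.2 ∧ 1 ≤ p.2 ∧ p.2 ≤ (n:ℤ) ∧
        (w * sGen n i) p.2 < (w * sGen n i) p.1}
      = insert ((i:ℤ), (i:ℤ)+1)
        ((fun p : ℤ × ℤ => (sFun n i p.1, sFun n i p.2)) ''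
          {p : ℤ × ℤ | p.1 < p.2 ∧ 1 ≤ p.2 ∧ p.2 ≤ (n:ℤ) ∧ w p.2 < w p.1}) := by
    ext ⟨a, b⟩
    simp only [Set.mem_setOf_eq, Set.mem_insert_iff, Set.mem_image, hs, Prod.mk.injEq,
      Prod.exists]
    constructor
    · rintro ⟨hab, hb1, hb2, hinv⟩
      by_cases hq : a = (i:ℤ) ∧ b = (i:ℤ) + 1
      · left; exact hq
      · right
        have hord : sFun n i a < sFun n i b := by
          apply sFun_lt hn hab
          rintro ⟨hd, hb⟩
        -- a = i + k n, b = a + 1 forces (a,b) = (i,i+1)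
          obtain ⟨k, hk⟩ := hd
          rw [mul_comm] at hk
          have hk0 : k = 0 := by
            apply window_unique (j := (i:ℤ)+1) (j' := b) (by omega) (by omega) hb1 hb2
            omega
          subst hk0
          simp only [zero_mul] at hk
          exact hq ⟨by omega, by omega⟩
        refine ⟨sFun n i a, sFun n i b, ⟨hord, ?_, ?_, ?_⟩, ?_, ?_⟩
        · exact (sFun_window hi1 hi2 hn hb1 hb2).1
        · exact (sFun_window hi1 hi2 hn hb1 hb2).2
        · exact hinv
        · exact sFun_invol n i hnd a
        · exact sFun_invol n i hnd b
    · rintro (⟨ha, hb⟩ | ⟨x, y, ⟨hxy, hy1, hy2, hwxy⟩, hxa, hyb⟩)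
      · subst ha; subst hb
        refine ⟨by omega, by omega, by omega, ?_⟩
        rw [sFun_flip1 hn hdii, sFun_flip2 hn hdii]
        exact hlt
      · subst hxa; subst hyb
        have hord : sFun n i x < sFun n i y := by
          apply sFun_lt hn hxy
          rintro ⟨hd, hyx⟩
          obtain ⟨k, hk⟩ := hd
          rw [mul_comm] at hk
          have hwx : w x = w (i:ℤ) + k * n := by
            have hx : x = (i:ℤ) + k * n := by omega
            rw [hx, aff_apply hw.1]
          have hwy : w y = w ((i:ℤ)+1) + k * n := by
            have hy : y = ((i:ℤ)+1) + k * n := by omega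
            rw [hy, aff_apply hw.1]
          omega
        refine ⟨hord, ?_, ?_, ?_⟩
        · exact (sFun_window hi1 hi2 hn hy1 hy2).1
        · exact (sFun_window hi1 hi2 hn hy1 hy2).2
        · rw [sFun_invol n i hnd, sFun_invol n i hnd]; exact hwxy
  have hnotmem : ((i:ℤ), (i:ℤ)+1) ∉
      ((fun p : ℤ × ℤ => (sFun n i p.1, sFun n i p.2)) ''
        {p : ℤ × ℤ | p.1 < p.2 ∧ 1 ≤ p.2 ∧ p.2 ≤ (n:ℤ) ∧ w p.2 < w p.1}) := by
    rintro ⟨⟨x, y⟩, hxyS, heq⟩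
    simp only [Prod.mk.injEq] at heq
    have hx : x = (i:ℤ) + 1 := by
      have := congrArg (sFun n i) heq.1
      rw [sFun_invol n i hnd, sFun_flip1 hn hdii] at this
      exact this
    have hy : y = (i:ℤ) := by
      have := congrArg (sFun n i) heq.2
      rw [sFun_invol n i hnd, sFun_flip2 hn hdii] at this
      exact this
    have := hxyS.1
    simp only at this
    omega
  show Set.ncard _ = Set.ncard _ + 1
  rw [key, Set.ncard_insert_of_notMem hnotmem (hfin.image _),
    Set.ncard_image_of_injective _ hinj]

lemma wlt_of_ellA_right (hn : 2 ≤ n) {w : Equiv.Perm ℤ} (hw : IsAffinePerm n w) {i : ℕ}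
    (hi1 : 1 ≤ i) (hi2 : i ≤ n - 1)
    (h : ellA n (w * sGen n i) = ellA n w + 1) : w (i:ℤ) < w ((i:ℤ)+1) := by
  rcases lt_trichotomy (w (i:ℤ)) (w ((i:ℤ)+1)) with hlt | heq | hgt
  · exact hlt
  · exact absurd (w.injective heq) (by omega)
  · exfalso
    have hdii : (n:ℤ) ∣ (i:ℤ) - (i:ℤ) := by simp
    have hw' : IsAffinePerm n (w * sGen n i) := aff_mul_sGen hn hw hi1 hi2
    have hlt' : (w * sGen n i) (i:ℤ) < (w * sGen n i) ((i:ℤ)+1) := by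
      rw [Equiv.Perm.mul_apply, Equiv.Perm.mul_apply, sGen_apply hn, sGen_apply hn,
        sFun_flip1 hn hdii, sFun_flip2 hn hdii]
      exact hgt
    have h2 := ellA_right hn hw' hi1 hi2 hlt'
    rw [mul_assoc, sGen_sq hn, mul_one] at h2
    omega

end S12


namespace S12

variable {n : ℕ}

lemma ellA_left (hn : 2 ≤ n) {w : Equiv.Perm ℤ} (hw : IsAffinePerm n w) {i : ℕ}
    (hi1 : 1 ≤ i) (hi2 : i ≤ n - 1)
    (hlt : w.symm (i:ℤ) < w.symm ((i:ℤ)+1)) : ellA n (sGen n i * w) = ellA n w + 1 := by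
  have hnd := not_dvd_one hn
  have hs : ∀ j, (sGen n i * w) j = sFun n i (w j) := fun j => by
    rw [Equiv.Perm.mul_apply, sGen_apply hn]
  have hfin : {p : ℤ × ℤ | p.1 < p.2 ∧ 1 ≤ p.2 ∧ p.2 ≤ (n:ℤ) ∧ w p.2 < w p.1}.Finite :=
    inv_finite (by omega) hw
  obtain ⟨qd, hq1, hq2⟩ := window_rep n (by omega) (w.symm ((i:ℤ)+1))
  have ha0b0 : w.symm (i:ℤ) - qd * n < w.symm ((i:ℤ)+1) - qd * n := by omega
  have hwb0 : w (w.symm ((i:ℤ)+1) - qd * n) = ((i:ℤ) - qd * n) + 1 := by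
    have h1 : w.symm ((i:ℤ)+1) - qd * n = w.symm ((i:ℤ)+1) + (-qd) * n := by ring
    rw [h1, aff_apply hw.1, Equiv.apply_symm_apply]; ring
  have hwa0 : w (w.symm (i:ℤ) - qd * n) = (i:ℤ) - qd * n := by
    have h1 : w.symm (i:ℤ) - qd * n = w.symm (i:ℤ) + (-qd) * n := by ring
    rw [h1, aff_apply hw.1, Equiv.apply_symm_apply]; ring
  have hdx : (n:ℤ) ∣ ((i:ℤ) - qd * n) - (i:ℤ) := ⟨-qd, by ring⟩
  have key : {p : ℤ × ℤ | p.1 < p.2 ∧ 1 ≤ p.2 ∧ p.2 ≤ (n:ℤ) ∧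
        (sGen n i * w) p.2 < (sGen n i * w) p.1}
      = insert (w.symm (i:ℤ) - qd * n, w.symm ((i:ℤ)+1) - qd * n)
        {p : ℤ × ℤ | p.1 < p.2 ∧ 1 ≤ p.2 ∧ p.2 ≤ (n:ℤ) ∧ w p.2 < w p.1} := by
    ext ⟨a, b⟩
    simp only [Set.mem_setOf_eq, Set.mem_insert_iff, Prod.mk.injEq, hs]
    constructor
    · rintro ⟨hab, hb1, hb2, hinv⟩
      by_cases hm : w b < w a
      · right; exact ⟨hab, hb1, hb2, hm⟩
      · left
        have hne : w a ≠ w b := fun h => by have := w.injective h; omega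
        have hwab : w a < w b := by omega
        by_cases hex : (n:ℤ) ∣ w a - (i:ℤ) ∧ w b = w a + 1
        · obtain ⟨⟨k, hk⟩, hba⟩ := hex
          rw [mul_comm] at hk
          have ha : a = w.symm (i:ℤ) + k * n := by
            conv_lhs => rw [← w.symm_apply_apply a]
            rw [show w a = (i:ℤ) + k * n by omega, aff_symm_apply hw.1]
          have hb : b = w.symm ((i:ℤ)+1) + k * n := by
            conv_lhs => rw [← w.symm_apply_apply b]
            rw [show w b = ((i:ℤ)+1) + k * n by omega, aff_symm_apply hw.1]
          have hkq : b = (w.symm ((i:ℤ)+1) - qd * n) + (k + qd) * n := by rw [hb]; ring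
          have hk0 : k + qd = 0 := window_unique hq1 hq2 hb1 hb2 hkq
          have hkn : k * n = -(qd * n) := by
            have : k = -qd := by omega
            rw [this]; ring
          constructor <;> omega
        · exfalso
          have := sFun_lt hn hwab hex
          omega
    · rintro (⟨ha, hb⟩ | ⟨hab, hb1, hb2, hwba⟩)
      · subst ha; subst hb
        refine ⟨ha0b0, hq1, hq2, ?_⟩
        rw [hwa0, hwb0, sFun_flip1 hn hdx, sFun_flip2 hn hdx]
        omega
      · refine ⟨hab, hb1, hb2, ?_⟩
        apply sFun_lt hn hwba
        rintro ⟨⟨k, hk⟩, hab1⟩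
        rw [mul_comm] at hk
        have ha : a = w.symm ((i:ℤ)+1) + k * n := by
          conv_lhs => rw [← w.symm_apply_apply a]
          rw [show w a = ((i:ℤ)+1) + k * n by omega, aff_symm_apply hw.1]
        have hb : b = w.symm (i:ℤ) + k * n := by
          conv_lhs => rw [← w.symm_apply_apply b]
          rw [show w b = (i:ℤ) + k * n by omega, aff_symm_apply hw.1]
        omega
  have hnotmem : (w.symm (i:ℤ) - qd * n, w.symm ((i:ℤ)+1) - qd * n) ∉
      {p : ℤ × ℤ | p.1 < p.2 ∧ 1 ≤ p.2 ∧ p.2 ≤ (n:ℤ) ∧ w p.2 < w p.1} := by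
    rintro ⟨-, -, -, h4⟩
    simp only at h4
    rw [hwa0, hwb0] at h4
    omega
  show Set.ncard _ = Set.ncard _ + 1
  rw [key, Set.ncard_insert_of_notMem hnotmem hfin]

end S12


namespace S12

variable {n : ℕ}

/-- residue index in `Fin n` of the window representative of `i` (position `1 + rho`) -/
def rho (hn : 0 < n) (i : ℤ) : Fin n :=
  ⟨((i - 1) % (n:ℤ)).toNat, by
    have h1 := Int.emod_nonneg (i-1) (by exact_mod_cast hn.ne' : (n:ℤ) ≠ 0)
    have h2 := Int.emod_lt_of_pos (i-1) (by exact_mod_cast hn : (0:ℤ) < n)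
    omega⟩

def qZ (n : ℕ) (i : ℤ) : ℤ := (i - 1) / n

lemma rho_coe (hn : 0 < n) (i : ℤ) : ((rho hn i : ℕ) : ℤ) = (i - 1) % n := by
  simp only [rho]
  exact Int.toNat_of_nonneg (Int.emod_nonneg _ (by exact_mod_cast hn.ne'))

lemma nf_eq (hn : 0 < n) (i : ℤ) : i = 1 + ((rho hn i : ℕ) : ℤ) + qZ n i * n := by
  have h := Int.mul_ediv_add_emod (i - 1) n
  rw [rho_coe hn, qZ]
  have : (i-1) / (n:ℤ) * n = n * ((i-1)/n) := mul_comm _ _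
  omega

lemma rho_nf (hn : 0 < n) (x : Fin n) (k : ℤ) : rho hn (1 + (x:ℤ) + k * n) = x := by
  have h1 : (1 + (x:ℤ) + k * n - 1) = (x:ℤ) + k * n := by ring
  apply Fin.ext
  have h2 : (1 + (x:ℤ) + k * n - 1) % n = (x:ℤ) := by
    rw [h1]
    rw [show (x:ℤ) + k * n = (x:ℤ) + (n:ℤ) * k by ring, Int.add_mul_emod_self_left]
    exact Int.emod_eq_of_lt (by positivity) (by exact_mod_cast x.2)
  have := rho_coe hn (1 + (x:ℤ) + k * n)
  rw [h2] at this
  omega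

lemma qZ_nf (hn : 0 < n) (x : Fin n) (k : ℤ) : qZ n (1 + (x:ℤ) + k * n) = k := by
  rw [qZ]
  have h1 : (1 + (x:ℤ) + k * n - 1) = (x:ℤ) + k * n := by ring
  rw [h1, Int.add_mul_ediv_right _ _ (by exact_mod_cast hn.ne' : (n:ℤ) ≠ 0),
    Int.ediv_eq_zero_of_lt (by positivity) (by exact_mod_cast x.2), zero_add]

lemma window_q (hn : 0 < n) {p : ℤ} (h1 : 1 ≤ p) (h2 : p ≤ n) :
    qZ n p = 0 ∧ ((rho hn p : ℕ) : ℤ) = p - 1 := by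
  have hr : (p - 1) % (n:ℤ) = p - 1 := Int.emod_eq_of_lt (by omega) (by omega)
  constructor
  · rw [qZ, Int.ediv_eq_zero_of_lt (by omega) (by omega)]
  · rw [rho_coe hn, hr]

lemma rev_coe (hn : 0 < n) (x : Fin n) : ((x.rev : ℕ) : ℤ) = (n:ℤ) - 1 - x := by
  have := Fin.val_rev x
  have hx := x.2
  omega

lemma nf_tau (hn : 0 < n) (x : Fin n) (k : ℤ) :
    (n:ℤ) + 1 - (1 + (x:ℤ) + k * n) = 1 + ((x.rev : ℕ) : ℤ) + (-k) * n := by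
  rw [rev_coe hn]; ring

section Constr

variable (hn : 0 < n) (a : Fin n → ℤ)

/-- window block of positions with the same `a`-value -/
noncomputable def Bset (x : Fin n) : Finset ℤ :=
  (Finset.Icc (1:ℤ) (n:ℤ)).filter (fun p => a (rho hn p) + qZ n p = a x)

lemma self_mem_Bset (x : Fin n) : 1 + (x:ℤ) ∈ Bset hn a x := by
  rw [Bset, Finset.mem_filter, Finset.mem_Icc]
  have hx := x.2
  have h0 : (1:ℤ) + (x:ℤ) = 1 + (x:ℤ) + 0 * n := by ring
  refine ⟨⟨by omega, by exact_mod_cast by omega⟩, ?_⟩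
  rw [h0, rho_nf hn, qZ_nf hn]
  ring

lemma Bset_nonempty (x : Fin n) : (Bset hn a x).Nonempty := ⟨_, self_mem_Bset hn a x⟩

noncomputable def bm (x : Fin n) : ℤ := (Bset hn a x).min' (Bset_nonempty hn a x)
noncomputable def bM (x : Fin n) : ℤ := (Bset hn a x).max' (Bset_nonempty hn a x)

noncomputable def dZ (x : Fin n) : ℤ := bm hn a x + bM hn a x - (1 + (x:ℤ))

lemma mem_Bset_iff {p : ℤ} {x : Fin n} :
    p ∈ Bset hn a x ↔ (1 ≤ p ∧ p ≤ n ∧ a (rho hn p) + qZ n p = a x) := by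
  rw [Bset, Finset.mem_filter, Finset.mem_Icc, and_assoc]

lemma bm_le (x : Fin n) : bm hn a x ≤ 1 + (x:ℤ) :=
  Finset.min'_le _ _ (self_mem_Bset hn a x)

lemma le_bM (x : Fin n) : 1 + (x:ℤ) ≤ bM hn a x :=
  Finset.le_max' _ _ (self_mem_Bset hn a x)

lemma bm_mem (x : Fin n) : bm hn a x ∈ Bset hn a x := Finset.min'_mem _ _
lemma bM_mem (x : Fin n) : bM hn a x ∈ Bset hn a x := Finset.max'_mem _ _

lemma interval_mem_Bset (ha : ∀ i j : Fin n, i ≤ j → a i ≤ a j) {p : ℤ} {x : Fin n} (h1 : bm hn a x ≤ p) (h2 : p ≤ bM hn a x) :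
    p ∈ Bset hn a x := by
  have hm := (mem_Bset_iff hn a).mp (bm_mem hn a x)
  have hM := (mem_Bset_iff hn a).mp (bM_mem hn a x)
  have hp1 : 1 ≤ p := le_trans hm.1 h1
  have hp2 : p ≤ n := le_trans h2 hM.2.1
  -- each element of the window has qZ = 0
  have qm := window_q hn hm.1 hm.2.1
  have qM := window_q hn hM.1 hM.2.1
  have qp := window_q hn hp1 hp2
  rw [mem_Bset_iff]
  refine ⟨hp1, hp2, ?_⟩
  rw [qp.1, add_zero]
  have hle1 : rho hn (bm hn a x) ≤ rho hn p := by
    rw [Fin.le_def]; omega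
  have hle2 : rho hn p ≤ rho hn (bM hn a x) := by
    rw [Fin.le_def]; omega
  have e1 : a (rho hn (bm hn a x)) = a x := by
    have := hm.2.2; rw [qm.1, add_zero] at this; exact this
  have e2 : a (rho hn (bM hn a x)) = a x := by
    have := hM.2.2; rw [qM.1, add_zero] at this; exact this
  have := ha _ _ hle1
  have := ha _ _ hle2
  omega

lemma Bset_congr {x y : Fin n} (h : a y = a x) : Bset hn a y = Bset hn a x := by
  unfold Bset
  apply Finset.filter_congr
  intro p _
  rw [h]

lemma dZ_mem (ha : ∀ i j : Fin n, i ≤ j → a i ≤ a j) (x : Fin n) : dZ hn a x ∈ Bset hn a x := by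
  apply interval_mem_Bset hn a ha
  · rw [dZ]; have := le_bM hn a x; omega
  · rw [dZ]; have := bm_le hn a x; omega

lemma dZ_window (ha : ∀ i j : Fin n, i ≤ j → a i ≤ a j) (x : Fin n) : 1 ≤ dZ hn a x ∧ dZ hn a x ≤ n := by
  have := (mem_Bset_iff hn a).mp (dZ_mem hn a ha x)
  exact ⟨this.1, this.2.1⟩

noncomputable def dF (x : Fin n) : Fin n := rho hn (dZ hn a x)

lemma dF_coe (ha : ∀ i j : Fin n, i ≤ j → a i ≤ a j) (x : Fin n) : ((dF hn a x : ℕ) : ℤ) = dZ hn a x - 1 := by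
  have hw := dZ_window hn a ha x
  exact (window_q hn hw.1 hw.2).2

lemma a_dF (ha : ∀ i j : Fin n, i ≤ j → a i ≤ a j) (x : Fin n) : a (dF hn a x) = a x := by
  have hw := dZ_window hn a ha x
  have := ((mem_Bset_iff hn a).mp (dZ_mem hn a ha x)).2.2
  rw [(window_q hn hw.1 hw.2).1, add_zero] at this
  exact this

lemma bm_dF (ha : ∀ i j : Fin n, i ≤ j → a i ≤ a j) (x : Fin n) : bm hn a (dF hn a x) = bm hn a x := by
  rw [bm, bm]
  congr 1
  exact Bset_congr hn a (a_dF hn a ha x)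

lemma bM_dF (ha : ∀ i j : Fin n, i ≤ j → a i ≤ a j) (x : Fin n) : bM hn a (dF hn a x) = bM hn a x := by
  rw [bM, bM]
  congr 1
  exact Bset_congr hn a (a_dF hn a ha x)

lemma dZ_dF (ha : ∀ i j : Fin n, i ≤ j → a i ≤ a j) (x : Fin n) : dZ hn a (dF hn a x) = 1 + (x:ℤ) := by
  rw [dZ, bm_dF hn a ha, bM_dF hn a ha, dF_coe hn a ha, dZ]
  ring

lemma dF_dF (ha : ∀ i j : Fin n, i ≤ j → a i ≤ a j) (x : Fin n) : dF hn a (dF hn a x) = x := by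
  rw [dF, dZ_dF hn a ha]
  have : (1 : ℤ) + (x:ℤ) = 1 + (x:ℤ) + 0 * n := by ring
  rw [this, rho_nf hn]

/-- The forward map of the constructed permutation. -/
noncomputable def fwdF (i : ℤ) : ℤ := n * (a (rho hn i) + qZ n i) + ((n:ℤ) + 1 - dZ hn a (rho hn i))

lemma fwdF_nf (x : Fin n) (k : ℤ) :
    fwdF hn a (1 + (x:ℤ) + k * n) = n * (a x + k) + ((n:ℤ) + 1 - dZ hn a x) := by
  rw [fwdF, rho_nf hn, qZ_nf hn]

noncomputable def gF (i : ℤ) : ℤ := (n:ℤ) + 1 - fwdF hn a ((n:ℤ) + 1 - i)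

lemma gF_nf (ha : ∀ i j : Fin n, i ≤ j → a i ≤ a j) (x : Fin n) (k : ℤ) :
    gF hn a (1 + (x:ℤ) + k * n)
      = 1 + ((dF hn a x.rev : ℕ) : ℤ) + (k - a x.rev) * n := by
  rw [gF, nf_tau hn, fwdF_nf hn a, dF_coe hn a ha]
  ring

end Constr

end S12


namespace S12

variable {n : ℕ}

lemma exists_nf (hn : 0 < n) (i : ℤ) : ∃ (x : Fin n) (k : ℤ), i = 1 + (x:ℤ) + k * n :=
  ⟨rho hn i, qZ n i, nf_eq hn i⟩

section Constr

variable (hn : 0 < n) (a : Fin n → ℤ)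
variable (ha : ∀ i j : Fin n, i ≤ j → a i ≤ a j)
include hn
include ha

lemma gF_fwdF (i : ℤ) : gF hn a (fwdF hn a i) = i := by
  obtain ⟨x, k, hi⟩ := exists_nf hn i
  subst hi
  rw [fwdF_nf hn a]
  have h2 : (n:ℤ) * (a x + k) + ((n:ℤ) + 1 - dZ hn a x)
      = 1 + (((dF hn a x).rev : ℕ) : ℤ) + (a x + k) * n := by
    rw [rev_coe hn, dF_coe hn a ha]; ring
  rw [h2, gF_nf hn a ha, Fin.rev_rev, dF_dF hn a ha, a_dF hn a ha]
  ring

lemma fwdF_gF (i : ℤ) : fwdF hn a (gF hn a i) = i := by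
  obtain ⟨x, k, hi⟩ := exists_nf hn i
  subst hi
  rw [gF_nf hn a ha, fwdF_nf hn a, a_dF hn a ha, dZ_dF hn a ha, rev_coe hn]
  ring

/-- The permutation `w_a` attached to a weakly increasing sequence `a`. -/
noncomputable def Phi : Equiv.Perm ℤ := ⟨fwdF hn a, gF hn a, gF_fwdF hn a ha, fwdF_gF hn a ha⟩

lemma Phi_apply (i : ℤ) : Phi hn a ha i = fwdF hn a i := rfl
lemma Phi_symm_apply (i : ℤ) : (Phi hn a ha).symm i = gF hn a i := rfl

omit ha in
lemma fwdF_per (i : ℤ) : fwdF hn a (i + n) = fwdF hn a i + n := by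
  obtain ⟨x, k, hi⟩ := exists_nf hn i
  subst hi
  have h1 : 1 + (x:ℤ) + k * n + n = 1 + (x:ℤ) + (k+1) * n := by ring
  rw [h1, fwdF_nf hn a, fwdF_nf hn a]
  ring

lemma fwdF_mono {p p' : ℤ} (h1 : 1 ≤ p) (h2 : p < p') (h3 : p' ≤ n) :
    fwdF hn a p < fwdF hn a p' := by
  have w1 := window_q hn h1 (by omega)
  have w2 := window_q hn (by omega : 1 ≤ p') h3
  have hp : p = 1 + ((rho hn p : ℕ) : ℤ) + 0 * n := by omega
  have hp' : p' = 1 + ((rho hn p' : ℕ) : ℤ) + 0 * n := by omega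
  rw [hp, hp', fwdF_nf hn a, fwdF_nf hn a]
  set x := rho hn p
  set y := rho hn p'
  have hxy : x < y := by rw [Fin.lt_def]; omega
  have hdx := dZ_window hn a ha x
  have hdy := dZ_window hn a ha y
  have haxy : a x ≤ a y := ha _ _ (le_of_lt hxy)
  rcases eq_or_lt_of_le haxy with heq | hlt
  · have hb1 : bm hn a y = bm hn a x := by
      rw [bm, bm]; congr 1; exact Bset_congr hn a heq.symm
    have hb2 : bM hn a y = bM hn a x := by
      rw [bM, bM]; congr 1; exact Bset_congr hn a heq.symm
    have : dZ hn a y < dZ hn a x := by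
      rw [dZ, dZ, hb1, hb2]
      rw [Fin.lt_def] at hxy
      omega
    rw [heq]
    omega
  · have key : (n:ℤ) * (a x + 1) ≤ (n:ℤ) * a y := by
      apply mul_le_mul_of_nonneg_left (by omega) (by positivity)
    nlinarith
  
omit ha in
lemma sum_Icc_fin (f : ℤ → ℤ) :
    ∑ p ∈ Finset.Icc (1:ℤ) (n:ℤ), f p = ∑ x : Fin n, f (1 + (x:ℤ)) := by
  refine Finset.sum_nbij' (fun p => rho hn p) (fun x => 1 + (x:ℤ)) ?_ ?_ ?_ ?_ ?_
  · intro p _; exact Finset.mem_univ _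
  · intro x _
    show (1:ℤ) + (x:ℤ) ∈ Finset.Icc (1:ℤ) (n:ℤ)
    rw [Finset.mem_Icc]
    have hx := x.2
    constructor <;> omega
  · intro p hp
    show 1 + ((rho hn p : ℕ) : ℤ) = p
    rw [Finset.mem_Icc] at hp
    have := window_q hn hp.1 hp.2
    omega
  · intro x _
    show rho hn (1 + (x:ℤ)) = x
    have h0 : (1:ℤ) + (x:ℤ) = 1 + (x:ℤ) + 0 * n := by ring
    rw [h0, rho_nf hn]
  · intro p hp
    show f p = f (1 + ((rho hn p : ℕ) : ℤ))
    rw [Finset.mem_Icc] at hp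
    have := window_q hn hp.1 hp.2
    congr 1
    omega

lemma Phi_affine (hsum : ∑ x : Fin n, a x = 0) : IsAffinePerm n (Phi hn a ha) := by
  constructor
  · intro i
    exact fwdF_per hn a i
  · have h1 : ∑ p ∈ Finset.Icc (1:ℤ) (n:ℤ), Phi hn a ha p
        = ∑ x : Fin n, ((n:ℤ) * a x + ((n:ℤ) + 1 - dZ hn a x)) := by
      rw [sum_Icc_fin hn]
      apply Finset.sum_congr rfl
      intro x _
      rw [Phi_apply]
      have : (1:ℤ) + (x:ℤ) = 1 + (x:ℤ) + 0 * n := by ring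
      rw [this, fwdF_nf hn a]
      ring
    rw [h1]
    rw [Finset.sum_add_distrib, ← Finset.mul_sum, hsum, mul_zero, zero_add]
    have h2 : ∀ x : Fin n, (n:ℤ) + 1 - dZ hn a x = 1 + (((dF hn a x).rev : ℕ) : ℤ) := by
      intro x
      rw [rev_coe hn, dF_coe hn a ha]
      ring
    have h3 : ∑ x : Fin n, ((n:ℤ) + 1 - dZ hn a x)
        = ∑ x : Fin n, (1 + ((x : ℕ) : ℤ)) := by
      rw [Finset.sum_congr rfl (fun x _ => h2 x)]
      apply Fintype.sum_bijective (fun x => (dF hn a x).rev)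
      · rw [← Finite.injective_iff_bijective]
        intro u v huv
        have h4 := congrArg (fun z => dF hn a (Fin.rev z)) huv
        simp only [Fin.rev_rev] at h4
        rwa [dF_dF hn a ha, dF_dF hn a ha] at h4
      · intro x; rfl
    rw [h3]
    exact (sum_Icc_fin hn (fun p => p)).symm

lemma Phi_lam : lam n (Phi hn a ha) = a := by
  funext x
  rw [lam]
  have h1 : ((x : ℕ) : ℤ) + 1 = 1 + (x:ℤ) + 0 * n := by ring
  rw [h1, Phi_apply, fwdF_nf hn a]
  have hd := dZ_window hn a ha x
  have h2 : (n:ℤ) * (a x + 0) + ((n:ℤ) + 1 - dZ hn a x) - 1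
      = ((n:ℤ) - dZ hn a x) + a x * n := by ring
  rw [h2, Int.fdiv_eq_ediv_of_nonneg _ (by positivity),
    Int.add_mul_ediv_right _ _ (by exact_mod_cast hn.ne' : (n:ℤ) ≠ 0),
    Int.ediv_eq_zero_of_lt (by omega) (by omega), zero_add]

lemma Phi_tau : (tauN n * Phi hn a ha) * (tauN n * Phi hn a ha) = 1 := by
  ext i
  simp only [Equiv.Perm.mul_apply, Equiv.Perm.one_apply]
  show tauN n (Phi hn a ha (tauN n (Phi hn a ha i))) = i
  have h1 : ∀ j, tauN n j = (n:ℤ) + 1 - j := fun _ => rfl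
  have h2 := gF_fwdF hn a ha i
  rw [gF] at h2
  rw [h1, h1, Phi_apply, Phi_apply]
  omega

lemma Phi_mem (hn2 : 2 ≤ n) (hsum : ∑ x : Fin n, a x = 0) :
    Phi hn a ha ∈ Omega'Set n := by
  have haff := Phi_affine hn a ha hsum
  refine ⟨haff, Phi_tau hn a ha, ?_⟩
  intro i hi1 hi2
  have hi1' : 1 ≤ (i:ℤ) := by omega
  have hi2' : (i:ℤ) ≤ (n:ℤ) - 1 := by omega
  constructor
  · apply ellA_left hn2 haff hi1 hi2
    rw [Phi_symm_apply, Phi_symm_apply, gF, gF]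
    have h3 : fwdF hn a ((n:ℤ) + 1 - ((i:ℤ)+1)) < fwdF hn a ((n:ℤ) + 1 - (i:ℤ)) := by
      apply fwdF_mono hn a ha (by omega) (by omega) (by omega)
    omega
  · apply ellA_right hn2 haff hi1 hi2
    rw [Phi_apply, Phi_apply]
    exact fwdF_mono hn a ha (by omega) (by omega) (by omega)

end Constr

end S12


namespace S12

variable {n : ℕ}

lemma mem_consec (hn : 2 ≤ n) {w : Equiv.Perm ℤ} (hw : w ∈ Omega'Set n) {i : ℕ}
    (hi1 : 1 ≤ i) (hi2 : i ≤ n - 1) : w (i:ℤ) < w ((i:ℤ)+1) :=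
  wlt_of_ellA_right hn hw.1 hi1 hi2 ((hw.2.2 i hi1 hi2).2)

lemma mem_window_mono (hn : 2 ≤ n) {w : Equiv.Perm ℤ} (hw : w ∈ Omega'Set n) :
    ∀ p p' : ℤ, 1 ≤ p → p < p' → p' ≤ (n:ℤ) → w p < w p' := by
  have step : ∀ k : ℕ, ∀ p : ℤ, 1 ≤ p → p + k + 1 ≤ (n:ℤ) → w p < w (p + k + 1) := by
    intro k
    induction k with
    | zero =>
        intro p hp1 hp2
        have hp' : p = ((p.toNat : ℕ) : ℤ) := by omega
        have h1 : 1 ≤ p.toNat := by omega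
        have h2 : p.toNat ≤ n - 1 := by omega
        have := mem_consec hn hw h1 h2
        rw [← hp'] at this
        simpa using this
    | succ k ih =>
        intro p hp1 hp2
        have h1 : w p < w (p + k + 1) := ih p hp1 (by omega)
        have hq : p + (k:ℤ) + 1 = (((p + k + 1).toNat : ℕ) : ℤ) := by omega
        have h2 : w (p + k + 1) < w (p + k + 1 + 1) := by
          have ha1 : 1 ≤ (p + (k:ℤ) + 1).toNat := by omega
          have ha2 : (p + (k:ℤ) + 1).toNat ≤ n - 1 := by omega
          have := mem_consec hn hw ha1 ha2
          rw [← hq] at this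
          exact this
        push_cast
        have e : p + ((k:ℤ)+1) + 1 = p + (k:ℤ) + 1 + 1 := by ring
        rw [e]
        omega
  intro p p' hp1 hpp hp2
  have hk : p' = p + ((p' - p - 1).toNat : ℤ) + 1 := by omega
  rw [hk]
  exact step _ p hp1 (by omega)

/-- `A_w(p) = ⌊(w(p)-1)/n⌋` extended to all of `ℤ`. -/
def Aw (n : ℕ) (w : Equiv.Perm ℤ) (p : ℤ) : ℤ := Int.fdiv (w p - 1) (n:ℤ)

/-- residue part: `C_w(p) = w(p) - n A_w(p) ∈ [1,n]`. -/
def Cw (n : ℕ) (w : Equiv.Perm ℤ) (p : ℤ) : ℤ := w p - (n:ℤ) * Aw n w p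

lemma Cw_window (hn : 0 < n) (w : Equiv.Perm ℤ) (p : ℤ) :
    1 ≤ Cw n w p ∧ Cw n w p ≤ n := by
  have h0 : (0:ℤ) < n := by exact_mod_cast hn
  have h1 : Aw n w p = (w p - 1) / n := Int.fdiv_eq_ediv_of_nonneg _ (le_of_lt h0)
  have h2 := Int.mul_ediv_add_emod (w p - 1) n
  have h3 := Int.emod_nonneg (w p - 1) (by omega : (n:ℤ) ≠ 0)
  have h4 := Int.emod_lt_of_pos (w p - 1) h0
  rw [Cw, h1]
  omega

lemma Aw_lam (w : Equiv.Perm ℤ) (x : Fin n) : lam n w x = Aw n w (1 + (x:ℤ)) := by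
  rw [lam, Aw, add_comm]

lemma lam_mono (hn : 2 ≤ n) {w : Equiv.Perm ℤ} (hw : w ∈ Omega'Set n) :
    ∀ x y : Fin n, x ≤ y → lam n w x ≤ lam n w y := by
  intro x y hxy
  rcases eq_or_lt_of_le hxy with heq | hlt
  · rw [heq]
  · rw [Aw_lam, Aw_lam, Aw, Aw]
    have hx := x.2
    have hy := y.2
    rw [Fin.lt_def] at hlt
    have hww : w (1 + (x:ℤ)) < w (1 + (y:ℤ)) := by
      apply mem_window_mono hn hw _ _ (by omega) (by exact_mod_cast by omega)
        (by exact_mod_cast by omega)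
    rw [Int.fdiv_eq_ediv_of_nonneg _ (by positivity), Int.fdiv_eq_ediv_of_nonneg _ (by positivity)]
    apply Int.ediv_le_ediv (by positivity : (0:ℤ) < n)
    omega

lemma Cw_injOn (hn : 0 < n) {w : Equiv.Perm ℤ} (haff : IsAffinePerm n w) :
    ∀ p ∈ Finset.Icc (1:ℤ) (n:ℤ), ∀ p' ∈ Finset.Icc (1:ℤ) (n:ℤ),
      Cw n w p = Cw n w p' → p = p' := by
  intro p hp p' hp' hC
  rw [Finset.mem_Icc] at hp hp'
  have hk : w p = w p' + (Aw n w p - Aw n w p') * n := by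
    rw [Cw, Cw] at hC
    have hr : (Aw n w p - Aw n w p') * (n:ℤ) = n * Aw n w p - n * Aw n w p' := by ring
    omega
  have h2 : w p = w (p' + (Aw n w p - Aw n w p') * n) := by
    rw [aff_apply haff.1]
    exact hk
  have h3 : p = p' + (Aw n w p - Aw n w p') * n := w.injective h2
  have h4 : Aw n w p - Aw n w p' = 0 := window_unique hp'.1 hp'.2 hp.1 hp.2 h3
  rw [h4] at h3
  omega

lemma lam_sum (hn : 2 ≤ n) {w : Equiv.Perm ℤ} (hw : w ∈ Omega'Set n) :
    ∑ x : Fin n, lam n w x = 0 := by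
  have hn0 : 0 < n := by omega
  have hinj := Cw_injOn hn0 hw.1
  have himage : (Finset.Icc (1:ℤ) (n:ℤ)).image (Cw n w) = Finset.Icc (1:ℤ) (n:ℤ) := by
    apply Finset.eq_of_subset_of_card_le
    · intro q hq
      rw [Finset.mem_image] at hq
      obtain ⟨p, _, hpq⟩ := hq
      rw [Finset.mem_Icc, ← hpq]
      exact Cw_window hn0 w p
    · rw [Finset.card_image_of_injOn hinj]
  have hsumC : ∑ p ∈ Finset.Icc (1:ℤ) (n:ℤ), Cw n w p = ∑ p ∈ Finset.Icc (1:ℤ) (n:ℤ), p := by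
    conv_rhs => rw [← himage]
    rw [Finset.sum_image hinj]
  have hsplit : ∑ p ∈ Finset.Icc (1:ℤ) (n:ℤ), w p
      = (n:ℤ) * (∑ p ∈ Finset.Icc (1:ℤ) (n:ℤ), Aw n w p)
        + ∑ p ∈ Finset.Icc (1:ℤ) (n:ℤ), Cw n w p := by
    rw [Finset.mul_sum, ← Finset.sum_add_distrib]
    apply Finset.sum_congr rfl
    intro p _
    rw [Cw]
    ring
  have hzero : (n:ℤ) * (∑ p ∈ Finset.Icc (1:ℤ) (n:ℤ), Aw n w p) = 0 := by
    have := hw.1.2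
    omega
  have hA : ∑ p ∈ Finset.Icc (1:ℤ) (n:ℤ), Aw n w p = 0 := by
    rcases mul_eq_zero.mp hzero with h | h
    · exact absurd h (by exact_mod_cast hn0.ne')
    · exact h
  rw [show (∑ x : Fin n, lam n w x) = ∑ x : Fin n, Aw n w (1 + (x:ℤ)) from
    Finset.sum_congr rfl (fun x _ => Aw_lam w x), ← sum_Icc_fin hn0]
  exact hA

end S12


namespace S12

variable {n : ℕ}

def Dw (n : ℕ) (w : Equiv.Perm ℤ) (p : ℤ) : ℤ := (n:ℤ) + 1 - Cw n w p

lemma incr_ge {m M : ℤ} {f : ℤ → ℤ}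
    (hmap : ∀ p, m ≤ p → p ≤ M → (m ≤ f p ∧ f p ≤ M))
    (hmono : ∀ p p', m ≤ p → p < p' → p' ≤ M → f p < f p') :
    ∀ p, m ≤ p → p ≤ M → p ≤ f p := by
  have key : ∀ t : ℕ, ∀ p : ℤ, m ≤ p → p ≤ M → p = m + t → p ≤ f p := by
    intro t
    induction t with
    | zero => intro p h1 h2 h3; have := (hmap p h1 h2).1; omega
    | succ t ih =>
        intro p h1 h2 h3
        have hprev : p - 1 ≤ f (p - 1) := ih (p-1) (by omega) (by omega) (by omega)
        have : f (p-1) < f p := hmono (p-1) p (by omega) (by omega) h2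
        omega
  intro p h1 h2
  exact key (p - m).toNat p h1 h2 (by omega)

lemma mem_eq_Phi (hn0 : 0 < n) (hn2 : 2 ≤ n) {w : Equiv.Perm ℤ} (hw : w ∈ Omega'Set n)
    (a : Fin n → ℤ) (ha : ∀ i j : Fin n, i ≤ j → a i ≤ a j) (hla : lam n w = a) :
    w = Phi hn0 a ha := by
  have hmono := mem_window_mono hn2 hw
  have haff := hw.1
  have hne : (n:ℤ) ≠ 0 := by exact_mod_cast hn0.ne'
  have htau0 : ∀ i : ℤ, tauN n (w (tauN n (w i))) = i := by
    intro i
    have h2 := congrArg (fun e : Equiv.Perm ℤ => e i) hw.2.1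
    simpa [Equiv.Perm.mul_apply] using h2
  have htauval : ∀ j : ℤ, tauN n j = (n:ℤ) + 1 - j := fun _ => rfl
  have htau : ∀ j : ℤ, w ((n:ℤ) + 1 - w ((n:ℤ) + 1 - j)) = j := by
    intro j
    have h := htau0 ((n:ℤ) + 1 - j)
    simp only [htauval] at h
    omega
  have hCwin : ∀ p : ℤ, 1 ≤ Cw n w p ∧ Cw n w p ≤ n := Cw_window hn0 w
  have hD : ∀ p : ℤ, 1 ≤ p → p ≤ n → w (Dw n w p) = n * Aw n w p + ((n:ℤ) + 1 - p) := by
    intro p h1 h2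
    have h := htau ((n:ℤ) + 1 - p)
    have e : (n:ℤ) + 1 - ((n:ℤ) + 1 - p) = p := by ring
    rw [e] at h
    have hdecomp : (n:ℤ) + 1 - w p = Dw n w p + (- Aw n w p) * n := by
      rw [Dw, Cw]; ring
    rw [hdecomp, aff_apply haff.1] at h
    have hr : (- Aw n w p) * (n:ℤ) = -((n:ℤ) * Aw n w p) := by ring
    omega
  have hDwin : ∀ p : ℤ, 1 ≤ Dw n w p ∧ Dw n w p ≤ n := by
    intro p; have := hCwin p; rw [Dw]; omega
  have hAD : ∀ p : ℤ, 1 ≤ p → p ≤ n → Aw n w (Dw n w p) = Aw n w p := by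
    intro p h1 h2
    rw [Aw, hD p h1 h2]
    have e : (n:ℤ) * Aw n w p + ((n:ℤ) + 1 - p) - 1 = ((n:ℤ) - p) + Aw n w p * n := by ring
    rw [e, Int.fdiv_eq_ediv_of_nonneg _ (by positivity), Int.add_mul_ediv_right _ _ hne,
      Int.ediv_eq_zero_of_lt (by omega) (by omega), zero_add]
  have hCD : ∀ p : ℤ, 1 ≤ p → p ≤ n → Cw n w (Dw n w p) = (n:ℤ) + 1 - p := by
    intro p h1 h2
    rw [Cw, hD p h1 h2, hAD p h1 h2]
    ring
  have hDD : ∀ p : ℤ, 1 ≤ p → p ≤ n → Dw n w (Dw n w p) = p := by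
    intro p h1 h2
    rw [Dw, hCD p h1 h2]
    ring
  have hAa : ∀ p : ℤ, 1 ≤ p → p ≤ (n:ℤ) → a (rho hn0 p) + qZ n p = Aw n w p := by
    intro p h1 h2
    have hq := window_q hn0 h1 h2
    rw [hq.1, add_zero, ← hla, Aw_lam]
    congr 1
    omega
  have hkey : ∀ x : Fin n, ∀ p, p ∈ Bset hn0 a x →
      Dw n w p = bm hn0 a x + bM hn0 a x - p := by
    intro x p hp
    have hmemIcc : ∀ q, q ∈ Bset hn0 a x → bm hn0 a x ≤ q ∧ q ≤ bM hn0 a x :=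
      fun q hq => ⟨Finset.min'_le _ _ hq, Finset.le_max' _ _ hq⟩
    have hIccmem : ∀ q, bm hn0 a x ≤ q → q ≤ bM hn0 a x → q ∈ Bset hn0 a x :=
      fun q h1 h2 => interval_mem_Bset hn0 a ha h1 h2
    have hwinm : ∀ q, q ∈ Bset hn0 a x → (1 ≤ q ∧ q ≤ (n:ℤ)) := by
      intro q hq
      have := (mem_Bset_iff hn0 a).mp hq
      exact ⟨this.1, this.2.1⟩
    have hAq : ∀ q, q ∈ Bset hn0 a x → Aw n w q = a x := by
      intro q hq
      have h3 := (mem_Bset_iff hn0 a).mp hq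
      rw [← hAa q h3.1 h3.2.1]
      exact h3.2.2
    have hDmap : ∀ q, q ∈ Bset hn0 a x → Dw n w q ∈ Bset hn0 a x := by
      intro q hq
      have h3 := hwinm q hq
      have h4 := hDwin q
      rw [mem_Bset_iff]
      refine ⟨h4.1, h4.2, ?_⟩
      rw [hAa _ h4.1 h4.2, hAD q h3.1 h3.2, hAq q hq]
    have hDdec : ∀ q q', q ∈ Bset hn0 a x → q' ∈ Bset hn0 a x → q < q' →
        Dw n w q' < Dw n w q := by
      intro q q' hq hq' hlt
      have h3 := hwinm q hq
      have h3' := hwinm q' hq'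
      have hww : w q < w q' := hmono q q' h3.1 hlt h3'.2
      have hAeq : Aw n w q = Aw n w q' := by rw [hAq q hq, hAq q' hq']
      have hCq : Cw n w q < Cw n w q' := by rw [Cw, Cw, hAeq]; omega
      rw [Dw, Dw]; omega
    set m := bm hn0 a x
    set M := bM hn0 a x
    have hth_map : ∀ q, m ≤ q → q ≤ M → (m ≤ m + M - Dw n w q ∧ m + M - Dw n w q ≤ M) := by
      intro q h1 h2
      have := hmemIcc _ (hDmap q (hIccmem q h1 h2))
      omega
    have hth_mono : ∀ q q', m ≤ q → q < q' → q' ≤ M →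
        m + M - Dw n w q < m + M - Dw n w q' := by
      intro q q' h1 h2 h3
      have := hDdec q q' (hIccmem q h1 (by omega)) (hIccmem q' (by omega) h3) h2
      omega
    have hth'_map : ∀ q, m ≤ q → q ≤ M → (m ≤ Dw n w (m + M - q) ∧ Dw n w (m + M - q) ≤ M) := by
      intro q h1 h2
      exact hmemIcc _ (hDmap _ (hIccmem _ (by omega) (by omega)))
    have hth'_mono : ∀ q q', m ≤ q → q < q' → q' ≤ M →
        Dw n w (m + M - q) < Dw n w (m + M - q') := by
      intro q q' h1 h2 h3
      exact hDdec (m + M - q') (m + M - q) (hIccmem _ (by omega) (by omega))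
        (hIccmem _ (by omega) (by omega)) (by omega)
    have hge := incr_ge hth_map hth_mono
    have hge' := incr_ge hth'_map hth'_mono
    obtain ⟨hp1, hp2⟩ := hmemIcc p hp
    have hwm := hwinm _ (hIccmem (m + M - p) (by omega) (by omega))
    have hcomp : m + M - Dw n w (Dw n w (m + M - p)) = p := by
      rw [hDD _ hwm.1 hwm.2]
      ring
    have h1 : p ≤ Dw n w (m + M - p) := hge' p hp1 hp2
    have hq' := hth'_map p hp1 hp2
    have h2 : p ≤ m + M - Dw n w p := hge p hp1 hp2
    have h3 : m + M - Dw n w p ≤ m + M - Dw n w (Dw n w (m + M - p)) := by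
      rcases eq_or_lt_of_le h1 with he | hl
      · rw [← he]
      · have := hth_mono p (Dw n w (m + M - p)) hp1 hl hq'.2
        omega
    omega
  apply Equiv.ext
  intro i
  obtain ⟨x, k, hi⟩ := exists_nf hn0 i
  subst hi
  rw [Phi_apply, fwdF_nf hn0 a]
  have hx2 := x.2
  have hw1 : w (1 + (x:ℤ) + k * n) = w (1 + (x:ℤ)) + k * n := aff_apply haff.1 k _
  rw [hw1]
  have hp1 : (1:ℤ) ≤ 1 + (x:ℤ) := by omega
  have hp2 : 1 + (x:ℤ) ≤ (n:ℤ) := by exact_mod_cast by omega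
  have hmem : 1 + (x:ℤ) ∈ Bset hn0 a x := self_mem_Bset hn0 a x
  have hDp := hkey x _ hmem
  have hAx : Aw n w (1 + (x:ℤ)) = a x := by
    have h3 := (mem_Bset_iff hn0 a).mp hmem
    rw [← hAa _ hp1 hp2]
    exact h3.2.2
  have hCval : Cw n w (1 + (x:ℤ)) = (n:ℤ) + 1 - (bm hn0 a x + bM hn0 a x - (1 + (x:ℤ))) := by
    rw [← hDp, Dw]
    ring
  have hfinal : w (1 + (x:ℤ))
      = (n:ℤ) * a x + ((n:ℤ) + 1 - (bm hn0 a x + bM hn0 a x - (1 + (x:ℤ)))) := by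
    have hCdef : w (1 + (x:ℤ)) = (n:ℤ) * Aw n w (1 + (x:ℤ)) + Cw n w (1 + (x:ℤ)) := by
      rw [Cw]; ring
    rw [hCdef, hAx, hCval]
  rw [hfinal]
  have hdZ : dZ hn0 a x = bm hn0 a x + bM hn0 a x - (1 + (x:ℤ)) := rfl
  rw [hdZ]
  ring

end S12

/-- For every `n ≥ 2`, the map `w ↦ λ(w)` is a bijection from `Ω'_n` onto
the set of weakly increasing integer sequences of length `n` summing to zero. -/
theorem statement12 (n : ℕ) (hn : 2 ≤ n) :
    Set.BijOn (lam n) (Omega'Set n)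
      {a : Fin n → ℤ | (∀ i j : Fin n, i ≤ j → a i ≤ a j) ∧ ∑ i, a i = 0} := by
  have hn0 : 0 < n := by omega
  refine ⟨?_, ?_, ?_⟩
  · intro w hw
    exact ⟨S12.lam_mono hn hw, S12.lam_sum hn hw⟩
  · intro w hw w' hw' heq
    have h1 := S12.mem_eq_Phi hn0 hn hw (lam n w') (S12.lam_mono hn hw') heq
    have h2 := S12.mem_eq_Phi hn0 hn hw' (lam n w') (S12.lam_mono hn hw') rfl
    rw [h1]; exact h2.symm
  · intro a haT
    obtain ⟨ham, hsum⟩ := haT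
    exact ⟨S12.Phi hn0 a ham, S12.Phi_mem hn0 a ham hn hsum, S12.Phi_lam hn0 a ham⟩
end
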